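/- Context closure of implication: for all graphs G and H and every context C[·]_R, if G ⊸ H is provable in GS then C[G]_R ⊸ C[H]_R is provable in GS. -/

import Mathlib

namespace GSP

/-- Atoms: a propositional variable (coded by a natural number) with a polarity. -/
abbrev Atom := ℕ × Bool

/-- The dual atom. -/
def dualAtom (a : Atom) : Atom := (a.1, !a.2)

/-- A finite, simple, undirected graph whose vertices are labelled by atoms. -/
structure LGraph where
  V : Type
  [fintype : Fintype V]
  adj : V → V → Prop
  symm : ∀ {v w : V}, adj v w → adj w v
  irrefl : ∀ v : V, ¬ adj v v
  label : V → Atom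

attribute [instance] LGraph.fintype

namespace LGraph

/-- An isomorphism of labelled graphs: a vertex bijection preserving labels and
preserving and reflecting edges. -/
structure Iso (G H : LGraph) where
  toEquiv : G.V ≃ H.V
  adj_iff : ∀ v w : G.V, G.adj v w ↔ H.adj (toEquiv v) (toEquiv w)
  label_eq : ∀ v : G.V, H.label (toEquiv v) = G.label v

/-- `G ≅ H` : the graphs `G` and `H` are isomorphic. -/
def iso (G H : LGraph) : Prop := Nonempty (Iso G H)

/-- The empty graph. -/
def empty : LGraph where
  V := Empty
  adj _ _ := False
  symm h := h.elim
  irrefl v := v.elim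
  label v := v.elim

/-- The single-vertex graph labelled by the atom `a`. -/
def single (a : Atom) : LGraph where
  V := Unit
  adj _ _ := False
  symm h := h.elim
  irrefl _ h := h
  label _ := a

def parAdj (G H : LGraph) : G.V ⊕ H.V → G.V ⊕ H.V → Prop
  | .inl a, .inl b => G.adj a b
  | .inr a, .inr b => H.adj a b
  | _, _ => False

/-- The par `G ⅋ H` : disjoint union of `G` and `H`. -/
def par (G H : LGraph) : LGraph where
  V := G.V ⊕ H.V
  adj := parAdj G H
  symm := by
    rintro (a | a) (b | b) h
    · exact G.symm h
    · exact h.elim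
    · exact h.elim
    · exact H.symm h
  irrefl := by
    rintro (a | a) h
    · exact G.irrefl a h
    · exact H.irrefl a h
  label := Sum.elim G.label H.label

def tensorAdj (G H : LGraph) : G.V ⊕ H.V → G.V ⊕ H.V → Prop
  | .inl a, .inl b => G.adj a b
  | .inr a, .inr b => H.adj a b
  | .inl _, .inr _ => True
  | .inr _, .inl _ => True

/-- The tensor `G ⊗ H` : join of `G` and `H` (disjoint union plus all edges in between). -/
def tensor (G H : LGraph) : LGraph where
  V := G.V ⊕ H.V
  adj := tensorAdj G H
  symm := by
    rintro (a | a) (b | b) h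
    · exact G.symm h
    · exact trivial
    · exact trivial
    · exact H.symm h
  irrefl := by
    rintro (a | a) h
    · exact G.irrefl a h
    · exact H.irrefl a h
  label := Sum.elim G.label H.label

/-- The dual graph `Ḡ` : same vertices, complemented edges, dualized labels. -/
def dual (G : LGraph) : LGraph where
  V := G.V
  adj v w := v ≠ w ∧ ¬ G.adj v w
  symm h := ⟨fun e => h.1 e.symm, fun h' => h.2 (G.symm h')⟩
  irrefl _ h := h.1 rfl
  label v := dualAtom (G.label v)

def plugAdj (C : LGraph) (R : Set C.V) (X : LGraph) : C.V ⊕ X.V → C.V ⊕ X.V → Prop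
  | .inl a, .inl b => C.adj a b
  | .inr a, .inr b => X.adj a b
  | .inl a, .inr _ => a ∈ R
  | .inr _, .inl b => b ∈ R

/-- `C[X]_R` : the graph obtained from the context `C[·]_R` by inserting the graph `X`
as a module whose vertices are adjacent exactly to the vertices in `R`. -/
def plug (C : LGraph) (R : Set C.V) (X : LGraph) : LGraph where
  V := C.V ⊕ X.V
  adj := plugAdj C R X
  symm := by
    rintro (a | a) (b | b) h
    · exact C.symm h
    · exact h
    · exact h
    · exact X.symm h
  irrefl := by
    rintro (a | a) h
    · exact C.irrefl a h
    · exact X.irrefl a h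
  label := Sum.elim C.label X.label

def compAdj (G : LGraph) (H : G.V → LGraph) :
    (Σ v : G.V, (H v).V) → (Σ v : G.V, (H v).V) → Prop := fun x y =>
  (∃ (v : G.V) (a b : (H v).V), x = ⟨v, a⟩ ∧ y = ⟨v, b⟩ ∧ (H v).adj a b) ∨
    (x.1 ≠ y.1 ∧ G.adj x.1 y.1)

/-- The composition `G⟨H v₁, …, H vₙ⟩` of the family `H` via the graph `G`:
replace each vertex `v` of `G` by the graph `H v`. -/
def comp (G : LGraph) (H : G.V → LGraph) : LGraph where
  V := Σ v : G.V, (H v).V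
  adj := compAdj G H
  symm := by
    rintro x y (⟨v, a, b, hx, hy, hab⟩ | ⟨hne, hadj⟩)
    · exact Or.inl ⟨v, b, a, hy, hx, (H v).symm hab⟩
    · exact Or.inr ⟨hne.symm, G.symm hadj⟩
  irrefl := by
    rintro ⟨v, a⟩ (⟨w, x, y, hx, hy, hxy⟩ | ⟨hne, _⟩)
    · have h := hx.symm.trans hy
      obtain rfl : x = y := by simpa using h
      exact (H w).irrefl x hxy
    · exact hne rfl
  label x := (H x.1).label x.2

/-- A module of `G` : a set `M` of vertices such that every vertex outside `M`
is adjacent either to all vertices of `M` or to none of them. -/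
def IsModule (G : LGraph) (M : Set G.V) : Prop :=
  ∀ v ∉ M, ∀ x ∈ M, ∀ y ∈ M, (G.adj v x ↔ G.adj v y)

/-- A prime graph: at least 2 vertices and only trivial modules. -/
def Prime (G : LGraph) : Prop :=
  2 ≤ Fintype.card G.V ∧
    ∀ M : Set G.V, G.IsModule M → M = ∅ ∨ (∃ v, M = {v}) ∨ M = Set.univ

/-- `G` is `P₄`-free: no four distinct vertices induce a path on 4 vertices. -/
def P4Free (G : LGraph) : Prop :=
  ¬ ∃ v₁ v₂ v₃ v₄ : G.V,
      v₁ ≠ v₂ ∧ v₁ ≠ v₃ ∧ v₁ ≠ v₄ ∧ v₂ ≠ v₃ ∧ v₂ ≠ v₄ ∧ v₃ ≠ v₄ ∧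
      G.adj v₁ v₂ ∧ G.adj v₂ v₃ ∧ G.adj v₃ v₄ ∧
      ¬ G.adj v₁ v₃ ∧ ¬ G.adj v₁ v₄ ∧ ¬ G.adj v₂ v₄

end LGraph

open LGraph

/-- The `n`-fold tensor `X₁ ⊗ ⋯ ⊗ Xₙ`. -/
def bigTensor : (n : ℕ) → (Fin n → LGraph) → LGraph
  | 0, _ => LGraph.empty
  | n + 1, F => (F 0).tensor (bigTensor n fun i => F i.succ)

/-- The `n`-fold par `X₁ ⅋ ⋯ ⅋ Xₙ`. -/
def bigPar : (n : ℕ) → (Fin n → LGraph) → LGraph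
  | 0, _ => LGraph.empty
  | n + 1, F => (F 0).par (bigPar n fun i => F i.succ)

/-- The inference rules of system GS (premise, conclusion). -/
inductive GSRule : LGraph → LGraph → Prop
  /-- ai↓ : premise `∅`, conclusion `ā ⅋ a`. -/
  | ai (a : Atom) : GSRule LGraph.empty ((single (dualAtom a)).par (single a))
  /-- ss↓ : premise `B[A]_S`, conclusion `B ⅋ A`, for `A ≠ ∅` and `S ≠ ∅`. -/
  | ss (A B : LGraph) (S : Set B.V) :
      Nonempty A.V → S ≠ ∅ → GSRule (B.plug S A) (B.par A)
  /-- p↓ : premise `(M₁ ⅋ N₁) ⊗ ⋯ ⊗ (Mₙ ⅋ Nₙ)`, conclusion `P̄⟨M₁,…,Mₙ⟩ ⅋ P⟨N₁,…,Nₙ⟩`,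
  for `P` prime with `n = |V(P)| ≥ 4` and all `Mᵢ ≠ ∅`. -/
  | p (n : ℕ) (P : LGraph) (e : P.V ≃ Fin n) (M N : Fin n → LGraph) :
      P.Prime → 4 ≤ n → (∀ i, Nonempty (M i).V) →
      GSRule (bigTensor n fun i => (M i).par (N i))
        ((P.dual.comp fun v => M (e v)).par (P.comp fun v => N (e v)))

/-- The "up" rules ai↑, ss↑, p↑ (premise, conclusion). -/
inductive UpRule : LGraph → LGraph → Prop
  /-- ai↑ : premise `a ⊗ ā`, conclusion `∅`. -/
  | ai (a : Atom) : UpRule ((single a).tensor (single (dualAtom a))) LGraph.empty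
  /-- ss↑ : premise `B ⊗ A`, conclusion `B[A]_S`, for `A ≠ ∅` and `S ≠ V(B)`. -/
  | ss (A B : LGraph) (S : Set B.V) :
      Nonempty A.V → S ≠ Set.univ → UpRule (B.tensor A) (B.plug S A)
  /-- p↑ : premise `P⟨M₁,…,Mₙ⟩ ⊗ P̄⟨N₁,…,Nₙ⟩`, conclusion `(M₁ ⊗ N₁) ⅋ ⋯ ⅋ (Mₙ ⊗ Nₙ)`,
  for `P` prime with `n = |V(P)| ≥ 4` and all `Mᵢ ≠ ∅`. -/
  | p (n : ℕ) (P : LGraph) (e : P.V ≃ Fin n) (M N : Fin n → LGraph) :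
      P.Prime → 4 ≤ n → (∀ i, Nonempty (M i).V) →
      UpRule ((P.comp fun v => M (e v)).tensor (P.dual.comp fun v => N (e v)))
        (bigPar n fun i => (M i).tensor (N i))

/-- The rules of system SGS : the rules of GS together with their duals. -/
def SGSRule (G H : LGraph) : Prop := GSRule G H ∨ UpRule G H

/-- A single inference step in a system: inside some context, replace a module
isomorphic to the premise of a rule by the corresponding conclusion. -/
def Step (Rules : LGraph → LGraph → Prop) (G H : LGraph) : Prop :=
  ∃ (C : LGraph) (R : Set C.V) (p c : LGraph),
    Rules p c ∧ G.iso (C.plug R p) ∧ H.iso (C.plug R c)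

/-- A derivation in a system from `G` to `H` : a finite sequence of inference steps
and isomorphisms leading from `G` to `H`. -/
def Deriv (Rules : LGraph → LGraph → Prop) (G H : LGraph) : Prop :=
  Relation.ReflTransGen (fun X Y => X.iso Y ∨ Step Rules X Y) G H

/-- A graph is provable in a system if there is a derivation from `∅` to it. -/
def Provable (Rules : LGraph → LGraph → Prop) (G : LGraph) : Prop :=
  Deriv Rules LGraph.empty G

/-- Formulas: unit, positive and negative atoms, par and tensor. -/
inductive Formula where
  | unit : Formula
  | pos (a : ℕ) : Formula
  | neg (a : ℕ) : Formula
  | par (φ ψ : Formula) : Formula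
  | tens (φ ψ : Formula) : Formula

/-- The graph `[φ]` of a formula `φ`. -/
def Formula.graph : Formula → LGraph
  | .unit => LGraph.empty
  | .pos a => single (a, true)
  | .neg a => single (a, false)
  | .par φ ψ => φ.graph.par ψ.graph
  | .tens φ ψ => φ.graph.tensor ψ.graph

/-- Structural equivalence of formulas: the smallest congruence making `⅋` and `⊗`
associative and commutative with unit `∘`. -/
inductive Formula.equiv : Formula → Formula → Prop
  | refl (φ) : Formula.equiv φ φ
  | symm {φ ψ} : Formula.equiv φ ψ → Formula.equiv ψ φ
  | trans {φ ψ χ} : Formula.equiv φ ψ → Formula.equiv ψ χ → Formula.equiv φ χ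
  | parComm (φ ψ) : Formula.equiv (.par φ ψ) (.par ψ φ)
  | parAssoc (φ ψ χ) : Formula.equiv (.par φ (.par ψ χ)) (.par (.par φ ψ) χ)
  | parUnit (φ) : Formula.equiv (.par φ .unit) φ
  | tensComm (φ ψ) : Formula.equiv (.tens φ ψ) (.tens ψ φ)
  | tensAssoc (φ ψ χ) : Formula.equiv (.tens φ (.tens ψ χ)) (.tens (.tens φ ψ) χ)
  | tensUnit (φ) : Formula.equiv (.tens φ .unit) φ
  | parCongr {φ φ' ψ ψ'} : Formula.equiv φ φ' → Formula.equiv ψ ψ' →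
      Formula.equiv (.par φ ψ) (.par φ' ψ')
  | tensCongr {φ φ' ψ ψ'} : Formula.equiv φ φ' → Formula.equiv ψ ψ' →
      Formula.equiv (.tens φ ψ) (.tens φ' ψ')

/-- A formula is unit-free if it contains no occurrence of the unit `∘`. -/
def Formula.UnitFree : Formula → Prop
  | .unit => False
  | .pos _ => True
  | .neg _ => True
  | .par φ ψ => φ.UnitFree ∧ ψ.UnitFree
  | .tens φ ψ => φ.UnitFree ∧ ψ.UnitFree

/-- The sequent calculus MLL° (multiplicative linear logic with mix) on multisets
of formulas. -/
inductive MLL : Multiset Formula → Prop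
  | ax (a : ℕ) : MLL {Formula.pos a, Formula.neg a}
  | tens {Γ Δ : Multiset Formula} (φ ψ : Formula) :
      MLL (φ ::ₘ Γ) → MLL (ψ ::ₘ Δ) → MLL (Formula.tens φ ψ ::ₘ (Γ + Δ))
  | par {Γ : Multiset Formula} (φ ψ : Formula) :
      MLL (φ ::ₘ ψ ::ₘ Γ) → MLL (Formula.par φ ψ ::ₘ Γ)
  | mix {Γ Δ : Multiset Formula} : MLL Γ → MLL Δ → MLL (Γ + Δ)

/-! ### Basic helper lemmas -/

lemma mem_image_inl_iff {α β : Type} {S : Set α} {a : α} :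
    (Sum.inl a : α ⊕ β) ∈ (Sum.inl '' S) ↔ a ∈ S := by simp

lemma mem_image_inl_inr_iff {α β : Type} {S : Set α} {b : β} :
    (Sum.inr b : α ⊕ β) ∈ (Sum.inl '' S) ↔ False := by simp

lemma mem_image_inr_iff {α β : Type} {S : Set β} {b : β} :
    (Sum.inr b : α ⊕ β) ∈ (Sum.inr '' S) ↔ b ∈ S := by simp

lemma mem_image_inr_inl_iff {α β : Type} {S : Set β} {a : α} :
    (Sum.inl a : α ⊕ β) ∈ (Sum.inr '' S) ↔ False := by simp

namespace LGraph

def Iso.refl' (G : LGraph) : Iso G G :=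
  ⟨Equiv.refl _, fun _ _ => Iff.rfl, fun _ => rfl⟩

def Iso.symm' {G H : LGraph} (f : Iso G H) : Iso H G where
  toEquiv := f.toEquiv.symm
  adj_iff v w := by
    rw [f.adj_iff (f.toEquiv.symm v) (f.toEquiv.symm w)]
    simp
  label_eq v := by
    conv_rhs => rw [← f.toEquiv.apply_symm_apply v, f.label_eq]

def Iso.trans' {G H K : LGraph} (f : Iso G H) (g : Iso H K) : Iso G K where
  toEquiv := f.toEquiv.trans g.toEquiv
  adj_iff v w := (f.adj_iff v w).trans (g.adj_iff _ _)
  label_eq v := ((g.label_eq (f.toEquiv v)).trans (f.label_eq v))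

def castIso {G H : LGraph} (h : G = H) : Iso G H := h ▸ Iso.refl' G

lemma comp_adj_same {P : LGraph} {K : P.V → LGraph} {v : P.V} (a b : (K v).V) :
    (P.comp K).adj ⟨v, a⟩ ⟨v, b⟩ ↔ (K v).adj a b := by
  constructor
  · rintro (⟨w, x, y, hx, hy, hxy⟩ | ⟨hne, _⟩)
    · obtain ⟨h1, h2⟩ := Sigma.mk.inj_iff.mp hx
      subst h1
      obtain rfl := eq_of_heq h2
      obtain ⟨h3, h4⟩ := Sigma.mk.inj_iff.mp hy
      obtain rfl := eq_of_heq h4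
      exact hxy
    · exact absurd rfl hne
  · intro h
    exact Or.inl ⟨v, a, b, rfl, rfl, h⟩

lemma comp_adj_ne {P : LGraph} {K : P.V → LGraph} {v w : P.V} (a : (K v).V) (b : (K w).V)
    (h : v ≠ w) : (P.comp K).adj ⟨v, a⟩ ⟨w, b⟩ ↔ P.adj v w := by
  constructor
  · rintro (⟨u, x, y, hx, hy, _⟩ | ⟨_, h2⟩)
    · exact absurd ((Sigma.mk.inj_iff.mp hx).1.trans (Sigma.mk.inj_iff.mp hy).1.symm) h
    · exact h2
  · exact fun h2 => Or.inr ⟨h, h2⟩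

/-! ### Congruence isomorphisms -/

def parIso {G G' H H' : LGraph} (f : Iso G G') (g : Iso H H') : Iso (G.par H) (G'.par H') where
  toEquiv := Equiv.sumCongr f.toEquiv g.toEquiv
  adj_iff := by
    rintro (a | a) (b | b)
    · exact f.adj_iff a b
    · exact Iff.rfl
    · exact Iff.rfl
    · exact g.adj_iff a b
  label_eq := by
    rintro (a | a)
    · exact f.label_eq a
    · exact g.label_eq a

def tensorIso {G G' H H' : LGraph} (f : Iso G G') (g : Iso H H') :
    Iso (G.tensor H) (G'.tensor H') where
  toEquiv := Equiv.sumCongr f.toEquiv g.toEquiv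
  adj_iff := by
    rintro (a | a) (b | b)
    · exact f.adj_iff a b
    · exact Iff.rfl
    · exact Iff.rfl
    · exact g.adj_iff a b
  label_eq := by
    rintro (a | a)
    · exact f.label_eq a
    · exact g.label_eq a

def dualIso {G H : LGraph} (f : Iso G H) : Iso G.dual H.dual where
  toEquiv := f.toEquiv
  adj_iff v w := by
    constructor
    · intro hc
      exact ⟨fun he => hc.1 (f.toEquiv.injective he), fun ha => hc.2 ((f.adj_iff v w).mpr ha)⟩
    · intro hc
      exact ⟨fun he => hc.1 (by rw [he]), fun ha => hc.2 ((f.adj_iff v w).mp ha)⟩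
  label_eq v := congrArg dualAtom (f.label_eq v)

def plugIso {C C' X X' : LGraph} {S : Set C.V} {S' : Set C'.V} (f : Iso C C')
    (hS : ∀ v, v ∈ S ↔ f.toEquiv v ∈ S') (g : Iso X X') :
    Iso (C.plug S X) (C'.plug S' X') where
  toEquiv := Equiv.sumCongr f.toEquiv g.toEquiv
  adj_iff := by
    rintro (a | a) (b | b)
    · exact f.adj_iff a b
    · exact hS a
    · exact hS b
    · exact g.adj_iff a b
  label_eq := by
    rintro (a | a)
    · exact f.label_eq a
    · exact g.label_eq a

def compIso {P P' : LGraph} {K : P.V → LGraph} {K' : P'.V → LGraph} (f : Iso P P')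
    (g : ∀ v, Iso (K v) (K' (f.toEquiv v))) : Iso (P.comp K) (P'.comp K') where
  toEquiv := Equiv.sigmaCongr f.toEquiv (fun v => (g v).toEquiv)
  adj_iff := by
    rintro ⟨v, a⟩ ⟨w, b⟩
    by_cases hvw : v = w
    · subst hvw
      exact (comp_adj_same a b).trans
        (((g v).adj_iff a b).trans (comp_adj_same _ _).symm)
    · have hne : f.toEquiv v ≠ f.toEquiv w := fun h => hvw (f.toEquiv.injective h)
      exact (comp_adj_ne a b hvw).trans ((f.adj_iff v w).trans (comp_adj_ne _ _ hne).symm)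
  label_eq := by rintro ⟨v, a⟩; exact (g v).label_eq a

def compIso' {P : LGraph} {K K' : P.V → LGraph} (g : ∀ v, Iso (K v) (K' v)) :
    Iso (P.comp K) (P.comp K') := compIso (Iso.refl' P) g

/-! ### Concrete structural isomorphisms -/

def parCommIso (G H : LGraph) : Iso (G.par H) (H.par G) where
  toEquiv := Equiv.sumComm _ _
  adj_iff := by rintro (a | a) (b | b) <;> exact Iff.rfl
  label_eq := by rintro (a | a) <;> rfl

def parAssocIso (G H K : LGraph) : Iso ((G.par H).par K) (G.par (H.par K)) where
  toEquiv := Equiv.sumAssoc _ _ _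
  adj_iff := by rintro ((a | a) | a) ((b | b) | b) <;> exact Iff.rfl
  label_eq := by rintro ((a | a) | a) <;> rfl

def tensorCommIso (G H : LGraph) : Iso (G.tensor H) (H.tensor G) where
  toEquiv := Equiv.sumComm _ _
  adj_iff := by rintro (a | a) (b | b) <;> exact Iff.rfl
  label_eq := by rintro (a | a) <;> rfl

def isoEmpty (G : LGraph) [h : IsEmpty G.V] : Iso G LGraph.empty where
  toEquiv := Equiv.equivEmpty G.V
  adj_iff v _ := h.elim v
  label_eq v := h.elim v

def parEmptyR (G X : LGraph) [h : IsEmpty X.V] : Iso (G.par X) G where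
  toEquiv := Equiv.sumEmpty G.V X.V
  adj_iff := by rintro (a | a) (b | b) <;> first | exact h.elim ‹_› | exact Iff.rfl
  label_eq := by rintro (a | a) <;> first | exact h.elim ‹_› | rfl

def parEmptyL (G X : LGraph) [h : IsEmpty G.V] : Iso (G.par X) X where
  toEquiv := Equiv.emptySum G.V X.V
  adj_iff := by rintro (a | a) (b | b) <;> first | exact h.elim ‹_› | exact Iff.rfl
  label_eq := by rintro (a | a) <;> first | exact h.elim ‹_› | rfl

def tensorEmptyR (G X : LGraph) [h : IsEmpty X.V] : Iso (G.tensor X) G where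
  toEquiv := Equiv.sumEmpty G.V X.V
  adj_iff := by rintro (a | a) (b | b) <;> first | exact h.elim ‹_› | exact Iff.rfl
  label_eq := by rintro (a | a) <;> first | exact h.elim ‹_› | rfl

def tensorEmptyL (G X : LGraph) [h : IsEmpty G.V] : Iso (G.tensor X) X where
  toEquiv := Equiv.emptySum G.V X.V
  adj_iff := by rintro (a | a) (b | b) <;> first | exact h.elim ‹_› | exact Iff.rfl
  label_eq := by rintro (a | a) <;> first | exact h.elim ‹_› | rfl

lemma inl_ne_inr' {α β : Type} {a : α} {b : β} : (Sum.inl a : α ⊕ β) ≠ Sum.inr b :=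
  fun h => Sum.inl_ne_inr h

lemma inr_ne_inl' {α β : Type} {a : α} {b : β} : (Sum.inr b : α ⊕ β) ≠ Sum.inl a :=
  fun h => Sum.inr_ne_inl h

lemma ne_and_iff_inl {α β : Type} {a b : α} {P Q : Prop} (hPQ : P ↔ Q) :
    ((Sum.inl a : α ⊕ β) ≠ Sum.inl b ∧ P) ↔ (a ≠ b ∧ Q) :=
  and_congr (not_congr ⟨fun h => by rw [h], fun h => by injection h⟩).symm hPQ

lemma ne_and_iff_inr {α β : Type} {a b : β} {P Q : Prop} (hPQ : P ↔ Q) :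
    ((Sum.inr a : α ⊕ β) ≠ Sum.inr b ∧ P) ↔ (a ≠ b ∧ Q) :=
  and_congr (not_congr ⟨fun h => by rw [h], fun h => by injection h⟩).symm hPQ

def dualParIso (G H : LGraph) : Iso (G.par H).dual (G.dual.tensor H.dual) where
  toEquiv := Equiv.refl _
  adj_iff := by
    rintro (a | a) (b | b)
    · exact ne_and_iff_inl Iff.rfl
    · exact iff_of_true ⟨inl_ne_inr', not_false⟩ trivial
    · exact iff_of_true ⟨inr_ne_inl', not_false⟩ trivial
    · exact ne_and_iff_inr Iff.rfl
  label_eq := by rintro (a | a) <;> rfl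

def dualTensorIso (G H : LGraph) : Iso (G.tensor H).dual (G.dual.par H.dual) where
  toEquiv := Equiv.refl _
  adj_iff := by
    rintro (a | a) (b | b)
    · exact ne_and_iff_inl Iff.rfl
    · exact iff_of_false (fun hc => hc.2 trivial) not_false
    · exact iff_of_false (fun hc => hc.2 trivial) not_false
    · exact ne_and_iff_inr Iff.rfl
  label_eq := by rintro (a | a) <;> rfl

def dualDualIso (G : LGraph) : Iso G.dual.dual G where
  toEquiv := Equiv.refl _
  adj_iff v w := by
    by_cases h : v = w
    · subst h
      exact iff_of_false (fun hc => hc.1 rfl) (G.irrefl v)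
    · constructor
      · intro hc
        by_contra hn
        exact hc.2 ⟨h, hn⟩
      · intro hadj
        exact ⟨h, fun hc => hc.2 hadj⟩
  label_eq v := by
    show G.label v = dualAtom (dualAtom (G.label v))
    simp [dualAtom]

def dualSingleIso (a : Atom) : Iso (single a).dual (single (dualAtom a)) where
  toEquiv := Equiv.refl _
  adj_iff := by rintro ⟨⟩ ⟨⟩; exact iff_of_false (fun hc => hc.1 rfl) not_false
  label_eq := by rintro ⟨⟩; rfl

def dualCompIso (P : LGraph) (K : P.V → LGraph) :
    Iso (P.comp K).dual (P.dual.comp fun v => (K v).dual) where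
  toEquiv := Equiv.refl _
  adj_iff := by
    rintro ⟨v, a⟩ ⟨w, b⟩
    by_cases h : v = w
    · subst h
      refine Iff.trans ?_ (comp_adj_same (P := P.dual) (K := fun u => (K u).dual) a b).symm
      show ((⟨v, a⟩ : (P.comp K).V) ≠ ⟨v, b⟩ ∧ ¬ (P.comp K).adj ⟨v, a⟩ ⟨v, b⟩) ↔ _
      rw [comp_adj_same a b]
      show _ ↔ (a ≠ b ∧ ¬ (K v).adj a b)
      constructor
      · rintro ⟨h1, h2⟩
        exact ⟨fun he => h1 (by rw [he]), h2⟩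
      · rintro ⟨h1, h2⟩
        refine ⟨fun he => h1 ?_, h2⟩
        obtain ⟨_, h4⟩ := Sigma.mk.inj_iff.mp he
        exact eq_of_heq h4
    · refine Iff.trans ?_ (comp_adj_ne (P := P.dual) (K := fun u => (K u).dual) a b h).symm
      show ((⟨v, a⟩ : (P.comp K).V) ≠ ⟨w, b⟩ ∧ ¬ (P.comp K).adj ⟨v, a⟩ ⟨w, b⟩) ↔ _
      rw [comp_adj_ne a b h]
      show _ ↔ (v ≠ w ∧ ¬ P.adj v w)
      constructor
      · rintro ⟨_, h2⟩; exact ⟨h, h2⟩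
      · rintro ⟨h1, h2⟩
        exact ⟨fun he => h ((Sigma.mk.inj_iff.mp he).1), h2⟩
  label_eq := by rintro ⟨v, a⟩; rfl

def isoSingle (G : LGraph) (v₀ : G.V) (hu : ∀ w : G.V, w = v₀) :
    Iso G (single (G.label v₀)) where
  toEquiv := ⟨fun _ => (), fun _ => v₀, fun w => (hu w).symm, fun _ => rfl⟩
  adj_iff v w := by
    rw [hu v, hu w]
    exact iff_of_false (G.irrefl v₀) not_false
  label_eq v := by rw [hu v]; rfl

def plugUnivIso (C X : LGraph) : Iso (C.plug Set.univ X) (C.tensor X) where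
  toEquiv := Equiv.refl _
  adj_iff := by rintro (a | a) (b | b) <;> exact Iff.rfl
  label_eq := by rintro (a | a) <;> rfl

def plugEmptySetIso (C X : LGraph) : Iso (C.plug ∅ X) (C.par X) where
  toEquiv := Equiv.refl _
  adj_iff := by rintro (a | a) (b | b) <;> exact Iff.rfl
  label_eq := by rintro (a | a) <;> rfl

def plugEmptyCIso (C X : LGraph) (R : Set C.V) [h : IsEmpty C.V] : Iso (C.plug R X) X where
  toEquiv := Equiv.emptySum C.V X.V
  adj_iff := by rintro (a | a) (b | b) <;> first | exact h.elim ‹_› | exact Iff.rfl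
  label_eq := by rintro (a | a) <;> first | exact h.elim ‹_› | rfl

def plugEmptyXIso (C X : LGraph) (R : Set C.V) [h : IsEmpty X.V] : Iso (C.plug R X) C where
  toEquiv := Equiv.sumEmpty C.V X.V
  adj_iff := by rintro (a | a) (b | b) <;> first | exact h.elim ‹_› | exact Iff.rfl
  label_eq := by rintro (a | a) <;> first | exact h.elim ‹_› | rfl

def plugParLeftIso (P Q X : LGraph) (S : Set P.V) :
    Iso ((P.par Q).plug (Sum.inl '' S) X) ((P.plug S X).par Q) where
  toEquiv := (Equiv.sumAssoc P.V Q.V X.V).trans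
    ((Equiv.sumCongr (Equiv.refl P.V) (Equiv.sumComm Q.V X.V)).trans
      (Equiv.sumAssoc P.V X.V Q.V).symm)
  adj_iff := by
    rintro ((a | a) | a) ((b | b) | b) <;>
      first
        | exact Iff.rfl
        | exact mem_image_inl_iff
        | exact mem_image_inl_inr_iff
  label_eq := by rintro ((a | a) | a) <;> rfl

def plugParRightIso (P Q X : LGraph) (S : Set Q.V) :
    Iso ((P.par Q).plug (Sum.inr '' S) X) (P.par (Q.plug S X)) where
  toEquiv := Equiv.sumAssoc P.V Q.V X.V
  adj_iff := by
    rintro ((a | a) | a) ((b | b) | b) <;>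
      first
        | exact Iff.rfl
        | exact mem_image_inr_iff
        | exact mem_image_inr_inl_iff
  label_eq := by rintro ((a | a) | a) <;> rfl

def plugTensorUnivIso (P Q X : LGraph) :
    Iso ((P.tensor Q).plug (Sum.inl '' Set.univ) X) (P.tensor (Q.par X)) where
  toEquiv := Equiv.sumAssoc P.V Q.V X.V
  adj_iff := by
    rintro ((a | a) | a) ((b | b) | b) <;>
      first
        | exact Iff.rfl
        | exact mem_image_inl_iff.trans (iff_of_true trivial trivial)
        | exact mem_image_inl_inr_iff
  label_eq := by rintro ((a | a) | a) <;> rfl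

def plugPlugIso (C D X : LGraph) (S : Set C.V) (U : Set D.V) :
    Iso (C.plug S (D.plug U X))
      ((C.plug S D).plug {w : C.V ⊕ D.V | Sum.elim (· ∈ S) (· ∈ U) w} X) where
  toEquiv := (Equiv.sumAssoc C.V D.V X.V).symm
  adj_iff := by rintro (a | (a | a)) (b | (b | b)) <;> exact Iff.rfl
  label_eq := by rintro (a | (a | a)) <;> rfl

end LGraph
/-! ### Derivation machinery -/

open LGraph

lemma deriv_of_iso {Rules : LGraph → LGraph → Prop} {G H : LGraph} (f : Iso G H) :
    Deriv Rules G H :=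
  Relation.ReflTransGen.single (Or.inl ⟨f⟩)

lemma Deriv.trans' {Rules : LGraph → LGraph → Prop} {G H K : LGraph}
    (d1 : Deriv Rules G H) (d2 : Deriv Rules H K) : Deriv Rules G K :=
  Relation.ReflTransGen.trans d1 d2

lemma step_context {Rules : LGraph → LGraph → Prop} (C : LGraph) (S : Set C.V) {X Y : LGraph}
    (h : Step Rules X Y) : Step Rules (C.plug S X) (C.plug S Y) := by
  obtain ⟨D, U, p, c, hr, ⟨f⟩, ⟨g⟩⟩ := h
  refine ⟨C.plug S D, {w | Sum.elim (· ∈ S) (· ∈ U) w}, p, c, hr, ⟨?_⟩, ⟨?_⟩⟩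
  · exact (plugIso (Iso.refl' C) (fun _ => Iff.rfl) f).trans' (plugPlugIso C D p S U)
  · exact (plugIso (Iso.refl' C) (fun _ => Iff.rfl) g).trans' (plugPlugIso C D c S U)

lemma deriv_context {Rules : LGraph → LGraph → Prop} (C : LGraph) (S : Set C.V) {X Y : LGraph}
    (h : Deriv Rules X Y) : Deriv Rules (C.plug S X) (C.plug S Y) := by
  induction h with
  | refl => exact Relation.ReflTransGen.refl
  | tail _ hstep ih =>
    refine ih.trans (Relation.ReflTransGen.single ?_)
    rcases hstep with hiso | hs
    · obtain ⟨f⟩ := hiso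
      exact Or.inl ⟨plugIso (Iso.refl' C) (fun _ => Iff.rfl) f⟩
    · exact Or.inr (step_context C S hs)

lemma deriv_rule {Rules : LGraph → LGraph → Prop} {p c G H : LGraph} (hr : Rules p c)
    (hG : Iso G p) (hH : Iso H c) : Deriv Rules G H :=
  Relation.ReflTransGen.single (Or.inr ⟨LGraph.empty, ∅, p, c, hr,
    ⟨hG.trans' (plugEmptyCIso LGraph.empty p ∅ (h := Empty.instIsEmpty)).symm'⟩,
    ⟨hH.trans' (plugEmptyCIso LGraph.empty c ∅ (h := Empty.instIsEmpty)).symm'⟩⟩)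

lemma prov_iso {Rules : LGraph → LGraph → Prop} {G H : LGraph} (hp : Provable Rules G)
    (f : Iso G H) : Provable Rules H :=
  hp.trans' (deriv_of_iso f)

lemma prov_empty {Rules : LGraph → LGraph → Prop} : Provable Rules LGraph.empty :=
  Relation.ReflTransGen.refl

lemma deriv_insert {Rules : LGraph → LGraph → Prop} (W : LGraph) (S : Set W.V) {Z : LGraph}
    (hZ : Provable Rules Z) : Deriv Rules W (W.plug S Z) :=
  (deriv_of_iso (plugEmptyXIso W LGraph.empty S (h := Empty.instIsEmpty)).symm').trans'
    (deriv_context W S hZ)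

lemma prov_par {Rules : LGraph → LGraph → Prop} {X Y : LGraph} (hX : Provable Rules X)
    (hY : Provable Rules Y) : Provable Rules (X.par Y) :=
  (hX.trans' (deriv_insert X ∅ hY)).trans' (deriv_of_iso (plugEmptySetIso X Y))

lemma prov_tensor {Rules : LGraph → LGraph → Prop} {X Y : LGraph} (hX : Provable Rules X)
    (hY : Provable Rules Y) : Provable Rules (X.tensor Y) :=
  (hX.trans' (deriv_insert X Set.univ hY)).trans' (deriv_of_iso (plugUnivIso X Y))

lemma prov_bigTensor {Rules : LGraph → LGraph → Prop} :
    ∀ (n : ℕ) (F : Fin n → LGraph), (∀ i, Provable Rules (F i)) →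
      Provable Rules (bigTensor n F)
  | 0, _, _ => Relation.ReflTransGen.refl
  | n + 1, F, h => prov_tensor (h 0) (prov_bigTensor n (fun i => F i.succ) (fun i => h i.succ))

lemma prov_ai (a : Atom) : Provable GSRule ((single (dualAtom a)).par (single a)) :=
  deriv_rule (GSRule.ai a) (Iso.refl' _) (Iso.refl' _)
/-! ### Modules, maximal modules, and the Gallai quotient -/

namespace LGraph

variable {X : LGraph}

lemma adj_comm (X : LGraph) (v w : X.V) : X.adj v w ↔ X.adj w v := ⟨X.symm, X.symm⟩

lemma isModule_singleton (X : LGraph) (v : X.V) : X.IsModule {v} := by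
  intro u _ x hx y hy
  rw [Set.mem_singleton_iff] at hx hy
  subst hx; subst hy
  exact Iff.rfl

/-- `X` is connected and co-connected ("no split"). -/
def NoSplit (X : LGraph) : Prop :=
  ∀ A : Set X.V, A.Nonempty → A ≠ Set.univ →
    (∃ a ∈ A, ∃ b ∉ A, X.adj a b) ∧ (∃ a ∈ A, ∃ b ∉ A, ¬ X.adj a b)

lemma union_module {M N : Set X.V} (hM : X.IsModule M) (hN : X.IsModule N)
    (hMN : (M ∩ N).Nonempty) : X.IsModule (M ∪ N) := by
  obtain ⟨w, hwM, hwN⟩ := hMN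
  intro v hv x hx y hy
  have hvM : v ∉ M := fun h => hv (Or.inl h)
  have hvN : v ∉ N := fun h => hv (Or.inr h)
  have key : ∀ z ∈ M ∪ N, (X.adj v z ↔ X.adj v w) := by
    rintro z (hz | hz)
    · exact hM v hvM z hz w hwM
    · exact hN v hvN z hz w hwN
  rw [key x hx, key y hy]

lemma no_split_overlap (hns : NoSplit X) {M N : Set X.V}
    (hM : X.IsModule M) (hN : X.IsModule N) (hMu : M ≠ Set.univ) (hNu : N ≠ Set.univ)
    (hun : M ∪ N = Set.univ) : False := by
  obtain ⟨u₀, hu₀⟩ : (M \ N).Nonempty := by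
    obtain ⟨x, hx⟩ : ∃ x, x ∉ N := by
      by_contra h; push_neg at h; exact hNu (Set.eq_univ_iff_forall.mpr h)
    have hx2 : x ∈ M ∪ N := by rw [hun]; exact Set.mem_univ x
    exact ⟨x, hx2.resolve_right hx, hx⟩
  obtain ⟨w₀, hw₀⟩ : (N \ M).Nonempty := by
    obtain ⟨x, hx⟩ : ∃ x, x ∉ M := by
      by_contra h; push_neg at h; exact hMu (Set.eq_univ_iff_forall.mpr h)
    have hx2 : x ∈ M ∪ N := by rw [hun]; exact Set.mem_univ x
    exact ⟨x, hx2.resolve_left hx, hx⟩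
  have compl_sub : ∀ b, b ∉ M \ N → b ∈ N := by
    intro b hb
    have hb2 : b ∈ M ∪ N := by rw [hun]; exact Set.mem_univ b
    rcases hb2 with h | h
    · by_contra hN'
      exact hb ⟨h, hN'⟩
    · exact h
  have uniform : ∀ a ∈ M \ N, ∀ b ∈ N, (X.adj a b ↔ X.adj u₀ w₀) := by
    intro a ha b hb
    have h1 : X.adj a b ↔ X.adj a w₀ := hN a ha.2 b hb w₀ hw₀.1
    have h2 : X.adj a w₀ ↔ X.adj u₀ w₀ := by
      have h3 := hM w₀ hw₀.2 a ha.1 u₀ hu₀.1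
      exact ⟨fun h => X.symm (h3.mp (X.symm h)), fun h => X.symm (h3.mpr (X.symm h))⟩
    exact h1.trans h2
  have hAne : (M \ N).Nonempty := ⟨u₀, hu₀⟩
  have hAuniv : (M \ N) ≠ Set.univ := by
    intro h
    have : w₀ ∈ M \ N := by rw [h]; exact Set.mem_univ w₀
    exact hw₀.2 this.1
  obtain ⟨⟨a1, ha1, b1, hb1, he⟩, ⟨a2, ha2, b2, hb2, hne⟩⟩ := hns (M \ N) hAne hAuniv
  exact hne ((uniform a2 ha2 b2 (compl_sub b2 hb2)).mpr
    ((uniform a1 ha1 b1 (compl_sub b1 hb1)).mp he))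

/-- The set of maximal proper nonempty modules of `X`. -/
def MaxMod (X : LGraph) : Set (Set X.V) :=
  {A | X.IsModule A ∧ A.Nonempty ∧ A ≠ Set.univ ∧
    ∀ B, X.IsModule B → B.Nonempty → B ≠ Set.univ → A ⊆ B → A = B}

lemma exists_maxMod_superset {A : Set X.V} (hmod : X.IsModule A) (hne : A.Nonempty)
    (hu : A ≠ Set.univ) : ∃ M ∈ MaxMod X, A ⊆ M := by
  classical
  set s : Set (Set X.V) := {B | X.IsModule B ∧ B.Nonempty ∧ B ≠ Set.univ ∧ A ⊆ B} with hs
  have hfin : s.Finite := Set.toFinite s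
  have hsne : s.Nonempty := ⟨A, hmod, hne, hu, subset_rfl⟩
  obtain ⟨M, hMs, hmax⟩ := Set.Finite.exists_maximalFor id s hfin hsne
  refine ⟨M, ⟨hMs.1, hMs.2.1, hMs.2.2.1, ?_⟩, hMs.2.2.2⟩
  intro B hBmod hBne hBu hMB
  exact subset_antisymm hMB (hmax ⟨hBmod, hBne, hBu, hMs.2.2.2.trans hMB⟩ hMB)

lemma maxMod_disjoint (hns : NoSplit X) {M N : Set X.V} (hM : M ∈ MaxMod X)
    (hN : N ∈ MaxMod X) (hMN : M ≠ N) : ∀ v, v ∈ M → v ∈ N → False := by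
  intro v hvM hvN
  have hun : X.IsModule (M ∪ N) := union_module hM.1 hN.1 ⟨v, hvM, hvN⟩
  by_cases hu : M ∪ N = Set.univ
  · exact no_split_overlap hns hM.1 hN.1 hM.2.2.1 hN.2.2.1 hu
  · have h1 := hM.2.2.2 (M ∪ N) hun ⟨v, Or.inl hvM⟩ hu Set.subset_union_left
    have h2 := hN.2.2.2 (M ∪ N) hun ⟨v, Or.inl hvM⟩ hu Set.subset_union_right
    exact hMN (h1.trans h2.symm)

lemma exists_class (h2 : 2 ≤ Fintype.card X.V) (v : X.V) : ∃ M ∈ MaxMod X, v ∈ M := by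
  have hsing : ({v} : Set X.V) ≠ Set.univ := by
    obtain ⟨w, hw⟩ := Fintype.exists_ne_of_one_lt_card (by omega) v
    intro h
    have : w ∈ ({v} : Set X.V) := by rw [h]; exact Set.mem_univ w
    exact hw (by simpa using this)
  obtain ⟨M, hM, hsub⟩ := exists_maxMod_superset (isModule_singleton X v) ⟨v, rfl⟩ hsing
  exact ⟨M, hM, hsub rfl⟩

/-- The Gallai quotient graph: vertices are the maximal proper modules. -/
noncomputable def quot (X : LGraph) : LGraph where
  V := {A : Set X.V // A ∈ MaxMod X}
  fintype := Fintype.ofFinite _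
  adj A B := A ≠ B ∧ ∃ a ∈ A.1, ∃ b ∈ B.1, X.adj a b
  symm := by
    rintro A B ⟨h1, a, ha, b, hb, hadj⟩
    exact ⟨h1.symm, b, hb, a, ha, X.symm hadj⟩
  irrefl A h := h.1 rfl
  label A := X.label A.2.2.1.choose

noncomputable def classOf (h2 : 2 ≤ Fintype.card X.V) (v : X.V) : (quot X).V :=
  ⟨(exists_class h2 v).choose, (exists_class h2 v).choose_spec.1⟩

lemma mem_classOf (h2 : 2 ≤ Fintype.card X.V) (v : X.V) : v ∈ (classOf h2 v).1 :=
  (exists_class h2 v).choose_spec.2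

lemma classOf_eq (hns : NoSplit X) (h2 : 2 ≤ Fintype.card X.V) {v : X.V} {A : (quot X).V}
    (hv : v ∈ A.1) : classOf h2 v = A := by
  by_contra hne
  exact maxMod_disjoint hns (classOf h2 v).2 A.2 (fun h => hne (Subtype.ext h)) v
    (mem_classOf h2 v) hv

lemma quot_adj_iff (hns : NoSplit X) {A B : (quot X).V} (hAB : A ≠ B) {a b : X.V}
    (ha : a ∈ A.1) (hb : b ∈ B.1) : (quot X).adj A B ↔ X.adj a b := by
  constructor
  · rintro ⟨_, a', ha', b', hb', h⟩
    have ha'B : a' ∉ B.1 := fun hc =>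
      maxMod_disjoint hns A.2 B.2 (fun h => hAB (Subtype.ext h)) a' ha' hc
    have hbA : b ∉ A.1 := fun hc =>
      maxMod_disjoint hns A.2 B.2 (fun h => hAB (Subtype.ext h)) b hc hb
    have h1 : X.adj a' b' ↔ X.adj a' b := B.2.1 a' ha'B b' hb' b hb
    have h2 : X.adj b a' ↔ X.adj b a := A.2.1 b hbA a' ha' a ha
    exact X.symm (h2.mp (X.symm (h1.mp h)))
  · intro h
    exact ⟨hAB, a, ha, b, hb, h⟩

lemma quot_module_trivial (hns : NoSplit X) (h2 : 2 ≤ Fintype.card X.V)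
    {M' : Set (quot X).V} (hmod' : (quot X).IsModule M') :
    M' = ∅ ∨ (∃ A, M' = {A}) ∨ M' = Set.univ := by
  classical
  by_cases h0 : M' = ∅
  · exact Or.inl h0
  by_cases h1 : ∃ A, M' = {A}
  · exact Or.inr (Or.inl h1)
  right; right
  obtain ⟨A₀, hA₀⟩ := Set.nonempty_iff_ne_empty.mpr h0
  obtain ⟨B₀, hB₀, hBA₀⟩ : ∃ B ∈ M', B ≠ A₀ := by
    by_contra hc
    push_neg at hc
    exact h1 ⟨A₀, Set.eq_singleton_iff_unique_mem.mpr ⟨hA₀, hc⟩⟩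
  set U : Set X.V := {x | ∃ A : (quot X).V, A ∈ M' ∧ x ∈ A.1} with hU
  have hUmod : X.IsModule U := by
    intro v hv x hx y hy
    obtain ⟨A, hA, hxA⟩ := hx
    obtain ⟨B, hB, hyB⟩ := hy
    have hCv : classOf h2 v ∉ M' := fun h => hv ⟨classOf h2 v, h, mem_classOf h2 v⟩
    have hCvA : classOf h2 v ≠ A := fun h => hv ⟨A, hA, h ▸ mem_classOf h2 v⟩
    have hCvB : classOf h2 v ≠ B := fun h => hv ⟨B, hB, h ▸ mem_classOf h2 v⟩
    rw [← quot_adj_iff hns hCvA (mem_classOf h2 v) hxA,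
      hmod' (classOf h2 v) hCv A hA B hB,
      quot_adj_iff hns hCvB (mem_classOf h2 v) hyB]
  by_cases hUuniv : U = Set.univ
  · apply Set.eq_univ_iff_forall.mpr
    intro C
    obtain ⟨c, hc⟩ := C.2.2.1
    have hcU : c ∈ U := by rw [hUuniv]; exact Set.mem_univ c
    obtain ⟨A, hA, hcA⟩ := hcU
    have hCA : C = A := by
      by_contra hne
      exact maxMod_disjoint hns C.2 A.2 (fun h => hne (Subtype.ext h)) c hc hcA
    rw [hCA]; exact hA
  · exfalso
    have hsub : A₀.1 ⊆ U := fun x hx => ⟨A₀, hA₀, hx⟩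
    have hUne : U.Nonempty := by
      obtain ⟨a, ha⟩ := A₀.2.2.1
      exact ⟨a, hsub ha⟩
    have hAU : A₀.1 = U := A₀.2.2.2.2 U hUmod hUne hUuniv hsub
    obtain ⟨b, hb⟩ := B₀.2.2.1
    have hbU : b ∈ U := ⟨B₀, hB₀, hb⟩
    rw [← hAU] at hbU
    exact maxMod_disjoint hns A₀.2 B₀.2 (fun h => hBA₀ (Subtype.ext h.symm)) b hbU hb

lemma quot_card2 (hns : NoSplit X) (h2 : 2 ≤ Fintype.card X.V) :
    2 ≤ Fintype.card (quot X).V := by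
  have hne : Nonempty X.V := Fintype.card_pos_iff.mp (by omega)
  obtain ⟨v⟩ := hne
  set A := classOf h2 v with hA
  obtain ⟨w, hw⟩ : ∃ w, w ∉ A.1 := by
    by_contra hc
    push_neg at hc
    exact A.2.2.2.1 (Set.eq_univ_iff_forall.mpr hc)
  set B := classOf h2 w with hB
  have hAB : A ≠ B := by
    intro h
    exact hw (h ▸ mem_classOf h2 w)
  exact Fintype.one_lt_card_iff.mpr ⟨A, B, hAB⟩

lemma quot_prime (hns : NoSplit X) (h2 : 2 ≤ Fintype.card X.V) : (quot X).Prime :=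
  ⟨quot_card2 hns h2, fun _ h => quot_module_trivial hns h2 h⟩

lemma quot_not2 (hns : NoSplit X) (h2 : 2 ≤ Fintype.card X.V) :
    Fintype.card (quot X).V ≠ 2 := by
  classical
  intro hcard
  have hcard' : (Finset.univ : Finset (quot X).V).card = 2 := by
    rw [Finset.card_univ]; exact hcard
  obtain ⟨A, B, hAB, he⟩ := Finset.card_eq_two.mp hcard'
  have huniv : ∀ C : (quot X).V, C = A ∨ C = B := by
    intro C
    have : C ∈ (Finset.univ : Finset (quot X).V) := Finset.mem_univ C
    rw [he] at this
    simpa using this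
  have key : ∀ a ∈ A.1, ∀ b, b ∉ A.1 → (X.adj a b ↔ (quot X).adj A B) := by
    intro a ha b hb
    have hbB : b ∈ B.1 := by
      rcases huniv (classOf h2 b) with h | h
      · exact absurd (h ▸ mem_classOf h2 b) hb
      · exact h ▸ mem_classOf h2 b
    exact (quot_adj_iff hns hAB ha hbB).symm
  obtain ⟨⟨a1, ha1, b1, hb1, hedge⟩, ⟨a2, ha2, b2, hb2, hnedge⟩⟩ :=
    hns A.1 A.2.2.1 A.2.2.2.1
  by_cases hq : (quot X).adj A B
  · exact hnedge ((key a2 ha2 b2 hb2).mpr hq)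
  · exact hq ((key a1 ha1 b1 hb1).mp hedge)

lemma quot_not3 (hns : NoSplit X) (h2 : 2 ≤ Fintype.card X.V) :
    Fintype.card (quot X).V ≠ 3 := by
  classical
  intro hcard
  have hcard' : (Finset.univ : Finset (quot X).V).card = 3 := by
    rw [Finset.card_univ]; exact hcard
  obtain ⟨A, B, C, hAB, hAC, hBC, he⟩ := Finset.card_eq_three.mp hcard'
  have huniv : ∀ D : (quot X).V, D = A ∨ D = B ∨ D = C := by
    intro D
    have : D ∈ (Finset.univ : Finset (quot X).V) := Finset.mem_univ D
    rw [he] at this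
    simpa using this
  have pairmod : ∀ P Q R' : (quot X).V, P ≠ Q → P ≠ R' → Q ≠ R' →
      (∀ v, v = P ∨ v = Q ∨ v = R') →
      ¬((quot X).adj R' P ↔ (quot X).adj R' Q) := by
    intro P Q R' hPQ hPR hQR huniv' hiff
    have hmod : (quot X).IsModule {P, Q} := by
      intro v hv x hx y hy
      have hvR : v = R' := by
        rcases huniv' v with h | h | h
        · exact absurd (by rw [h]; exact Set.mem_insert _ _) hv
        · exact absurd (by rw [h]; exact Set.mem_insert_iff.mpr (Or.inr rfl)) hv
        · exact h
      subst hvR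
      have hx' : x = P ∨ x = Q := by simpa using hx
      have hy' : y = P ∨ y = Q := by simpa using hy
      rcases hx' with rfl | rfl <;> rcases hy' with rfl | rfl
      · exact Iff.rfl
      · exact hiff
      · exact hiff.symm
      · exact Iff.rfl
    rcases quot_module_trivial hns h2 hmod with h | ⟨x, h⟩ | h
    · have : P ∈ ({P, Q} : Set (quot X).V) := Set.mem_insert _ _
      rw [h] at this
      exact this
    · have h1 : P = x := by
        have : P ∈ ({P, Q} : Set (quot X).V) := Set.mem_insert _ _
        rw [h] at this
        simpa using this
      have h2' : Q = x := by
        have : Q ∈ ({P, Q} : Set (quot X).V) := Set.mem_insert_iff.mpr (Or.inr rfl)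
        rw [h] at this
        simpa using this
      exact hPQ (h1.trans h2'.symm)
    · have : R' ∈ ({P, Q} : Set (quot X).V) := by rw [h]; exact Set.mem_univ R'
      rcases this with h' | h'
      · exact hPR h'.symm
      · exact hQR h'.symm
  have n1 := pairmod A B C hAB hAC hBC (fun v => huniv v)
  have n2 := pairmod B C A hBC hAB.symm hAC.symm (fun v => by
    rcases huniv v with h | h | h
    · exact Or.inr (Or.inr h)
    · exact Or.inl h
    · exact Or.inr (Or.inl h))
  have n3 := pairmod A C B hAC hAB (Ne.symm hBC) (fun v => by
    rcases huniv v with h | h | h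
    · exact Or.inl h
    · exact Or.inr (Or.inr h)
    · exact Or.inr (Or.inl h))
  have c1 := adj_comm (quot X) C A
  have c2 := adj_comm (quot X) C B
  have c3 := adj_comm (quot X) B A
  tauto

lemma quot_card4 (hns : NoSplit X) (h2 : 2 ≤ Fintype.card X.V) :
    4 ≤ Fintype.card (quot X).V := by
  have g2 := quot_card2 hns h2
  have g3 := quot_not2 hns h2
  have g4 := quot_not3 hns h2
  omega

/-- The induced subgraph on a set of vertices. -/
noncomputable def induce (X : LGraph) (A : Set X.V) : LGraph where
  V := A
  fintype := Fintype.ofFinite _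
  adj a b := X.adj a.1 b.1
  symm h := X.symm h
  irrefl a := X.irrefl a.1
  label a := X.label a.1

@[simp] lemma induce_adj {A : Set X.V} {a b : (X.induce A).V} :
    (X.induce A).adj a b ↔ X.adj a.1 b.1 := Iff.rfl
@[simp] lemma induce_label {A : Set X.V} {a : (X.induce A).V} :
    (X.induce A).label a = X.label a.1 := rfl

lemma card_induce_lt {A : Set X.V} (hu : A ≠ Set.univ) :
    Fintype.card (X.induce A).V < Fintype.card X.V := by
  classical
  obtain ⟨x, hx⟩ : ∃ x, x ∉ A := by
    by_contra hc
    push_neg at hc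
    exact hu (Set.eq_univ_iff_forall.mpr hc)
  have h1 : Fintype.card {y : X.V // y ∈ A} < Fintype.card X.V :=
    Fintype.card_subtype_lt (x := x) hx
  calc Fintype.card (X.induce A).V
      = Fintype.card {y : X.V // y ∈ A} := Fintype.card_congr (Equiv.refl _)
    _ < Fintype.card X.V := h1

end LGraph
/-! ### Decomposition case analysis and transport isomorphisms -/

namespace LGraph

variable {X : LGraph}

lemma main_cases (X : LGraph) :
    (∃ A : Set X.V, A.Nonempty ∧ A ≠ Set.univ ∧ ∀ a ∈ A, ∀ b ∉ A, ¬X.adj a b) ∨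
    (∃ A : Set X.V, A.Nonempty ∧ A ≠ Set.univ ∧ ∀ a ∈ A, ∀ b ∉ A, X.adj a b) ∨
    NoSplit X := by
  classical
  by_cases h1 : ∃ A : Set X.V, A.Nonempty ∧ A ≠ Set.univ ∧ ∀ a ∈ A, ∀ b ∉ A, ¬X.adj a b
  · exact Or.inl h1
  by_cases h2 : ∃ A : Set X.V, A.Nonempty ∧ A ≠ Set.univ ∧ ∀ a ∈ A, ∀ b ∉ A, X.adj a b
  · exact Or.inr (Or.inl h2)
  refine Or.inr (Or.inr ?_)
  intro A hne hu
  push_neg at h1 h2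
  constructor
  · obtain ⟨a, ha, b, hb, hab⟩ := h1 A hne hu
    exact ⟨a, ha, b, hb, hab⟩
  · obtain ⟨a, ha, b, hb, hab⟩ := h2 A hne hu
    exact ⟨a, ha, b, hb, hab⟩

lemma isModule_dual_iff (M : Set X.V) : X.dual.IsModule M ↔ X.IsModule M := by
  constructor
  · intro h v hv x hx y hy
    have hvx : v ≠ x := fun he => hv (he ▸ hx)
    have hvy : v ≠ y := fun he => hv (he ▸ hy)
    have := h v hv x hx y hy
    constructor
    · intro hadj
      by_contra hn
      exact (this.mpr ⟨hvy, hn⟩).2 hadj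
    · intro hadj
      by_contra hn
      exact (this.mp ⟨hvx, hn⟩).2 hadj
  · intro h v hv x hx y hy
    have hvx : v ≠ x := fun he => hv (he ▸ hx)
    have hvy : v ≠ y := fun he => hv (he ▸ hy)
    have := h v hv x hx y hy
    constructor
    · rintro ⟨_, hn⟩
      exact ⟨hvy, fun ha => hn (this.mpr ha)⟩
    · rintro ⟨_, hn⟩
      exact ⟨hvx, fun ha => hn (this.mp ha)⟩

lemma dual_prime {P : LGraph} (hp : P.Prime) : P.dual.Prime := by
  refine ⟨?_, ?_⟩
  · have : Fintype.card P.dual.V = Fintype.card P.V := Fintype.card_congr (Equiv.refl _)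
    rw [this]; exact hp.1
  · intro M hM
    exact hp.2 M ((isModule_dual_iff (X := P) M).mp hM)

/-- Split (par) decomposition of a graph. -/
noncomputable def splitParIso (X : LGraph) (A : Set X.V)
    (hcross : ∀ a ∈ A, ∀ b ∉ A, ¬X.adj a b) :
    Iso X ((X.induce A).par (X.induce {v | v ∉ A})) where
  toEquiv := by
    classical
    exact
      { toFun := fun v => if h : v ∈ A then Sum.inl ⟨v, h⟩ else Sum.inr ⟨v, h⟩
        invFun := fun z => Sum.elim (·.1) (·.1) z
        left_inv := fun v => by by_cases h : v ∈ A <;> simp [h] <;> rfl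
        right_inv := by
          rintro (⟨v, h⟩ | ⟨v, h⟩)
          · exact dif_pos h
          · exact dif_neg h }
  adj_iff := by
    intro v w
    by_cases hv : v ∈ A <;> by_cases hw : w ∈ A
    · simp only [Equiv.coe_fn_mk, hv, ↓reduceDIte, hw]; exact Iff.rfl
    · simp only [Equiv.coe_fn_mk, hv, ↓reduceDIte, hw]
      exact iff_of_false (hcross v hv w hw) id
    · simp only [Equiv.coe_fn_mk, hv, ↓reduceDIte, hw]
      exact iff_of_false (fun h => hcross w hw v hv (X.symm h)) id
    · simp only [Equiv.coe_fn_mk, hv, ↓reduceDIte, hw]; exact Iff.rfl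
  label_eq := by
    intro v
    by_cases hv : v ∈ A
    · simp only [Equiv.coe_fn_mk, hv, ↓reduceDIte]; rfl
    · simp only [Equiv.coe_fn_mk, hv, ↓reduceDIte]; rfl

/-- Split (tensor) decomposition of a graph. -/
noncomputable def splitTensorIso (X : LGraph) (A : Set X.V)
    (hcross : ∀ a ∈ A, ∀ b ∉ A, X.adj a b) :
    Iso X ((X.induce A).tensor (X.induce {v | v ∉ A})) where
  toEquiv := by
    classical
    exact
      { toFun := fun v => if h : v ∈ A then Sum.inl ⟨v, h⟩ else Sum.inr ⟨v, h⟩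
        invFun := fun z => Sum.elim (·.1) (·.1) z
        left_inv := fun v => by by_cases h : v ∈ A <;> simp [h] <;> rfl
        right_inv := by
          rintro (⟨v, h⟩ | ⟨v, h⟩)
          · exact dif_pos h
          · exact dif_neg h }
  adj_iff := by
    intro v w
    by_cases hv : v ∈ A <;> by_cases hw : w ∈ A
    · simp only [Equiv.coe_fn_mk, hv, ↓reduceDIte, hw]; exact Iff.rfl
    · simp only [Equiv.coe_fn_mk, hv, ↓reduceDIte, hw]
      exact iff_of_true (hcross v hv w hw) trivial
    · simp only [Equiv.coe_fn_mk, hv, ↓reduceDIte, hw]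
      exact iff_of_true (X.symm (hcross w hw v hv)) trivial
    · simp only [Equiv.coe_fn_mk, hv, ↓reduceDIte, hw]; exact Iff.rfl
  label_eq := by
    intro v
    by_cases hv : v ∈ A
    · simp only [Equiv.coe_fn_mk, hv, ↓reduceDIte]; rfl
    · simp only [Equiv.coe_fn_mk, hv, ↓reduceDIte]; rfl

/-- Transport of the Gallai decomposition: `X ≅ Q⟨K_A⟩`. -/
noncomputable def isoQuotComp (X : LGraph) (hns : NoSplit X) (h2 : 2 ≤ Fintype.card X.V) :
    Iso X ((quot X).comp fun A => X.induce A.1) := by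
  have quotMk_eq : ∀ (v : X.V) (B : (quot X).V) (hv : v ∈ B.1),
      (⟨classOf h2 v, ⟨v, mem_classOf h2 v⟩⟩ : ((quot X).comp fun A => X.induce A.1).V) =
        ⟨B, ⟨v, hv⟩⟩ := by
    intro v B hv
    have h := classOf_eq hns h2 hv
    subst h
    rfl
  refine
    { toEquiv :=
        { toFun := fun v => ⟨classOf h2 v, ⟨v, mem_classOf h2 v⟩⟩
          invFun := fun z => z.2.1
          left_inv := fun v => rfl
          right_inv := by
            rintro ⟨B, ⟨v, hv⟩⟩
            exact quotMk_eq v B hv }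
      adj_iff := ?_
      label_eq := fun v => rfl }
  intro v w
  erw [Equiv.coe_fn_mk]
  by_cases hcl : classOf h2 v = classOf h2 w
  · have hw' : w ∈ (classOf h2 v).1 := by rw [hcl]; exact mem_classOf h2 w
    erw [quotMk_eq w (classOf h2 v) hw', comp_adj_same]
    exact Iff.rfl
  · erw [comp_adj_ne _ _ hcl]
    exact (quot_adj_iff hns hcl (mem_classOf h2 v) (mem_classOf h2 w)).symm

end LGraph
/-! ### The identity theorem : `⊢ X̄ ⅋ X` -/

open LGraph

lemma deriv_rule_ctx {Rules : LGraph → LGraph → Prop} (C₀ : LGraph) (S₀ : Set C₀.V)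
    {p c G H : LGraph} (hr : Rules p c) (hG : Iso G (C₀.plug S₀ p))
    (hH : Iso H (C₀.plug S₀ c)) : Deriv Rules G H :=
  Relation.ReflTransGen.single (Or.inr ⟨C₀, S₀, p, c, hr, ⟨hG⟩, ⟨hH⟩⟩)

lemma prov_id_aux : ∀ (n : ℕ) (X : LGraph), Fintype.card X.V ≤ n →
    Provable GSRule (X.dual.par X) := by
  intro n
  induction n with
  | zero =>
    intro X hcard
    have hE : IsEmpty X.V := Fintype.card_eq_zero_iff.mp (Nat.le_zero.mp hcard)
    have hE2 : IsEmpty (X.dual.par X).V :=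
      ⟨fun z => match z with | .inl a => hE.elim a | .inr a => hE.elim a⟩
    exact prov_iso prov_empty (isoEmpty (X.dual.par X) (h := hE2)).symm'
  | succ n ih =>
    intro X hcard
    by_cases h0 : Fintype.card X.V = 0
    · have hE : IsEmpty X.V := Fintype.card_eq_zero_iff.mp h0
      have hE2 : IsEmpty (X.dual.par X).V :=
        ⟨fun z => match z with | .inl a => hE.elim a | .inr a => hE.elim a⟩
      exact prov_iso prov_empty (isoEmpty (X.dual.par X) (h := hE2)).symm'
    by_cases h1 : Fintype.card X.V = 1
    · obtain ⟨v₀, hu⟩ := Fintype.card_eq_one_iff.mp h1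
      have f := isoSingle X v₀ (fun w => hu w)
      exact prov_iso (prov_ai (X.label v₀))
        (parIso ((dualSingleIso (X.label v₀)).symm'.trans' (dualIso f.symm')) f.symm')
    have h2 : 2 ≤ Fintype.card X.V := by omega
    rcases main_cases X with ⟨A, hAne, hAu, hcross⟩ | ⟨A, hAne, hAu, hcross⟩ | hns
    · -- par split
      set Xa := X.induce A with hXa
      set Xb := X.induce {v | v ∉ A} with hXb
      have hBne : ({v : X.V | v ∉ A}).Nonempty := by
        by_contra hc
        push_neg at hc
        apply hAu
        apply Set.eq_univ_iff_forall.mpr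
        intro v
        by_contra hv
        have : v ∈ ({v : X.V | v ∉ A}) := hv
        rw [hc] at this
        exact this
      have hBu : ({v : X.V | v ∉ A}) ≠ Set.univ := by
        obtain ⟨a, ha⟩ := hAne
        intro hc
        have : a ∈ ({v : X.V | v ∉ A}) := by rw [hc]; exact Set.mem_univ a
        exact this ha
      have ihA : Provable GSRule (Xa.dual.par Xa) := by
        apply ih
        rw [hXa]
        have := card_induce_lt (X := X) hAu
        omega
      have ihB : Provable GSRule (Xb.dual.par Xb) := by
        apply ih
        rw [hXb]
        have := card_induce_lt (X := X) hBu
        omega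
      have hXane : Nonempty Xa.V := by
        obtain ⟨a, ha⟩ := hAne
        exact ⟨⟨a, ha⟩⟩
      have hXbne : Nonempty Xb.V := by
        obtain ⟨b, hb⟩ := hBne
        exact ⟨⟨b, hb⟩⟩
      -- derivation
      have d1 : Deriv GSRule (Xa.dual.par Xa)
          ((Xa.dual.par Xa).plug (Sum.inl '' Set.univ) (Xb.dual.par Xb)) :=
        deriv_insert _ _ ihB
      have d2 : Deriv GSRule ((Xa.dual.par Xa).plug (Sum.inl '' Set.univ) (Xb.dual.par Xb))
          ((Xa.dual.tensor (Xb.dual.par Xb)).par Xa) :=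
        deriv_of_iso ((plugParLeftIso _ _ _ _).trans' (parIso (plugUnivIso _ _) (Iso.refl' _)))
      obtain ⟨pt⟩ := hXane
      have hS : (Sum.inl '' (Set.univ : Set Xa.dual.V) :
          Set (Xa.dual.tensor Xb.dual).V) ≠ ∅ :=
        Set.Nonempty.ne_empty ⟨Sum.inl pt, Set.mem_image_of_mem _ (Set.mem_univ pt)⟩
      have hrule := GSRule.ss Xb (Xa.dual.tensor Xb.dual) (Sum.inl '' Set.univ) hXbne hS
      have d3 : Deriv GSRule ((Xa.dual.tensor (Xb.dual.par Xb)).par Xa)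
          (((Xa.dual.tensor Xb.dual).par Xb).par Xa) := by
        refine deriv_rule_ctx Xa ∅ hrule ?_ ?_
        · exact (parCommIso _ _).trans'
            ((parIso (Iso.refl' Xa) (plugTensorUnivIso _ _ _).symm').trans'
              (plugEmptySetIso _ _).symm')
        · exact (parCommIso _ _).trans' (plugEmptySetIso _ _).symm'
      have d4 : Deriv GSRule (((Xa.dual.tensor Xb.dual).par Xb).par Xa) (X.dual.par X) := by
        apply deriv_of_iso
        have fX := splitParIso X A hcross
        exact (parAssocIso _ _ _).trans'
          ((parIso (Iso.refl' _) (parCommIso _ _)).trans'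
            (parIso ((dualParIso Xa Xb).symm'.trans' (dualIso fX.symm')) fX.symm'))
      exact ihA.trans' (d1.trans' (d2.trans' (d3.trans' d4)))
    · -- tensor split
      set Xa := X.induce A with hXa
      set Xb := X.induce {v | v ∉ A} with hXb
      have hBne : ({v : X.V | v ∉ A}).Nonempty := by
        by_contra hc
        push_neg at hc
        apply hAu
        apply Set.eq_univ_iff_forall.mpr
        intro v
        by_contra hv
        have : v ∈ ({v : X.V | v ∉ A}) := hv
        rw [hc] at this
        exact this
      have hBu : ({v : X.V | v ∉ A}) ≠ Set.univ := by
        obtain ⟨a, ha⟩ := hAne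
        intro hc
        have : a ∈ ({v : X.V | v ∉ A}) := by rw [hc]; exact Set.mem_univ a
        exact this ha
      have ihA : Provable GSRule (Xa.dual.par Xa) := by
        apply ih
        rw [hXa]
        have := card_induce_lt (X := X) hAu
        omega
      have ihB : Provable GSRule (Xb.dual.par Xb) := by
        apply ih
        rw [hXb]
        have := card_induce_lt (X := X) hBu
        omega
      have hXane : Nonempty Xa.V := by
        obtain ⟨a, ha⟩ := hAne
        exact ⟨⟨a, ha⟩⟩
      have hXbne : Nonempty Xb.V := by
        obtain ⟨b, hb⟩ := hBne
        exact ⟨⟨b, hb⟩⟩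
      have d1 : Deriv GSRule (Xa.dual.par Xa)
          ((Xa.dual.par Xa).plug (Sum.inr '' Set.univ) (Xb.par Xb.dual)) :=
        deriv_insert _ _ (prov_iso ihB (parCommIso _ _))
      have d2 : Deriv GSRule ((Xa.dual.par Xa).plug (Sum.inr '' Set.univ) (Xb.par Xb.dual))
          (Xa.dual.par (Xa.tensor (Xb.par Xb.dual))) :=
        deriv_of_iso ((plugParRightIso _ _ _ _).trans' (parIso (Iso.refl' _) (plugUnivIso _ _)))
      obtain ⟨pt⟩ := hXane
      have hS : (Sum.inl '' (Set.univ : Set Xa.V) : Set (Xa.tensor Xb).V) ≠ ∅ :=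
        Set.Nonempty.ne_empty ⟨Sum.inl pt, Set.mem_image_of_mem _ (Set.mem_univ pt)⟩
      have hXbdne : Nonempty Xb.dual.V := hXbne
      have hrule := GSRule.ss Xb.dual (Xa.tensor Xb) (Sum.inl '' Set.univ) hXbdne hS
      have d3 : Deriv GSRule (Xa.dual.par (Xa.tensor (Xb.par Xb.dual)))
          (Xa.dual.par ((Xa.tensor Xb).par Xb.dual)) := by
        refine deriv_rule_ctx Xa.dual ∅ hrule ?_ ?_
        · exact (parIso (Iso.refl' _) (plugTensorUnivIso _ _ _).symm').trans'
            (plugEmptySetIso _ _).symm'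
        · exact (plugEmptySetIso _ _).symm'
      have d4 : Deriv GSRule (Xa.dual.par ((Xa.tensor Xb).par Xb.dual)) (X.dual.par X) := by
        apply deriv_of_iso
        have fX := splitTensorIso X A hcross
        exact (parIso (Iso.refl' _) (parCommIso _ _)).trans'
          ((parAssocIso _ _ _).symm'.trans'
            (parIso ((dualTensorIso Xa Xb).symm'.trans' (dualIso fX.symm')) fX.symm'))
      exact ihA.trans' (d1.trans' (d2.trans' (d3.trans' d4)))
    · -- prime case via Gallai quotient
      set K : (quot X).V → LGraph := fun A => X.induce A.1 with hK
      have fQ := isoQuotComp X hns h2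
      set e := Fintype.equivFin (quot X).V with he
      set M : Fin (Fintype.card (quot X).V) → LGraph := fun i => (K (e.symm i)).dual with hM
      set N : Fin (Fintype.card (quot X).V) → LGraph := fun i => K (e.symm i) with hN
      have hMne : ∀ i, Nonempty (M i).V := by
        intro i
        obtain ⟨a, ha⟩ := (e.symm i).2.2.1
        exact ⟨⟨a, ha⟩⟩
      have hrule := GSRule.p (Fintype.card (quot X).V) (quot X) e M N
        (quot_prime hns h2) (quot_card4 hns h2) hMne
      have hprem : Provable GSRule (bigTensor (Fintype.card (quot X).V)
          (fun i => (M i).par (N i))) := by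
        apply prov_bigTensor
        intro i
        apply ih
        show Fintype.card (X.induce ((e.symm i).1 : Set X.V)).V ≤ n
        have := card_induce_lt (X := X) ((e.symm i).2.2.2.1)
        omega
      have dstep := deriv_rule hrule (Iso.refl' _) (Iso.refl' _)
      have dfin : Deriv GSRule
          (((quot X).dual.comp fun v => M (e v)).par ((quot X).comp fun v => N (e v)))
          (X.dual.par X) := by
        apply deriv_of_iso
        have fM : Iso ((quot X).dual.comp fun v => M (e v))
            ((quot X).dual.comp fun A => (K A).dual) :=
          compIso' (fun v => castIso (by
            show (K (e.symm (e v))).dual = (K v).dual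
            exact congrArg (fun A => (K A).dual) (e.symm_apply_apply v)))
        have fN : Iso ((quot X).comp fun v => N (e v)) ((quot X).comp K) :=
          compIso' (fun v => castIso (by
            show K (e.symm (e v)) = K v
            rw [Equiv.symm_apply_apply]))
        exact (parIso (fM.trans' (dualCompIso (quot X) K).symm') fN).trans'
          (parIso (dualIso fQ.symm') fQ.symm')
      exact hprem.trans' (dstep.trans' dfin)

theorem prov_id (X : LGraph) : Provable GSRule (X.dual.par X) :=
  prov_id_aux (Fintype.card X.V) X le_rfl
/-! ### Transport isomorphisms for contexts with a hole -/

namespace LGraph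

lemma adj_cast {G G' : LGraph} (h : G = G') (p : G.V = G'.V) (a b : G.V) :
    G'.adj (cast p a) (cast p b) ↔ G.adj a b := by subst h; exact Iff.rfl

lemma label_cast {G G' : LGraph} (h : G = G') (p : G.V = G'.V) (a : G.V) :
    G'.label (cast p a) = G.label a := by subst h; rfl

section SplitWithHole

variable (C : LGraph) (R : Set C.V) (a₀ : Atom)

/-- Par-split of a context with a hole: if the one-vertex extension `C[x]_R` splits with
no cross edges and the hole is in `A`, then `C[Y]_R ≅ (D'[Y] ⅋ B)`. -/
noncomputable def splitParPlugIso (A : Set (C.plug R (single a₀)).V)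
    (hxA : Sum.inr () ∈ A)
    (hcross : ∀ u ∈ A, ∀ v ∉ A, ¬(C.plug R (single a₀)).adj u v) (Y : LGraph) :
    Iso (C.plug R Y)
      (((C.induce {c | Sum.inl c ∈ A}).plug
          {d : (C.induce {c | Sum.inl c ∈ A}).V | d.1 ∈ R} Y).par
        (C.induce {c | Sum.inl c ∉ A})) where
  toEquiv := by
    classical
    exact
      { toFun := fun z => Sum.elim
          (fun c => if h : Sum.inl c ∈ A then Sum.inl (Sum.inl ⟨c, h⟩) else Sum.inr ⟨c, h⟩)
          (fun y => Sum.inl (Sum.inr y)) z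
        invFun := fun z => Sum.elim
          (Sum.elim (fun d => Sum.inl d.1) (fun y => Sum.inr y)) (fun d => Sum.inl d.1) z
        left_inv := by
          rintro (c | y)
          · by_cases h : Sum.inl c ∈ A
            · simp only [Sum.elim, h, ↓reduceDIte]; rfl
            · simp only [Sum.elim, h, ↓reduceDIte]
              rfl
          · rfl
        right_inv := by
          rintro ((⟨c, hc⟩ | y) | ⟨c, hc⟩)
          · have hc' : Sum.inl c ∈ A := hc
            simp only [Sum.elim, hc', ↓reduceDIte]; rfl
          · rfl
          · have hc' : Sum.inl c ∉ A := hc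
            simp only [Sum.elim, hc', ↓reduceDIte]; rfl }
  adj_iff := by
    rintro (c | y) (c' | y')
    · simp only [Equiv.coe_fn_mk, Sum.elim]
      by_cases h : Sum.inl c ∈ A <;> by_cases h' : Sum.inl c' ∈ A
      · simp only [h, h', ↓reduceDIte]; exact Iff.rfl
      · simp only [h, h', ↓reduceDIte]
        exact iff_of_false (hcross _ h _ h') id
      · simp only [h, h', ↓reduceDIte]
        exact iff_of_false (fun hadj => hcross _ h' _ h (C.symm hadj)) id
      · simp only [h, h', ↓reduceDIte]; exact Iff.rfl
    · simp only [Equiv.coe_fn_mk, Sum.elim]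
      by_cases h : Sum.inl c ∈ A
      · simp only [h, ↓reduceDIte]; exact Iff.rfl
      · simp only [h, ↓reduceDIte]
        exact iff_of_false (fun hr => hcross _ hxA _ h hr) id
    · simp only [Equiv.coe_fn_mk, Sum.elim]
      by_cases h : Sum.inl c' ∈ A
      · simp only [h, ↓reduceDIte]; exact Iff.rfl
      · simp only [h, ↓reduceDIte]
        exact iff_of_false (fun hr => hcross _ hxA _ h hr) id
    · exact Iff.rfl
  label_eq := by
    rintro (c | y)
    · simp only [Equiv.coe_fn_mk, Sum.elim]
      by_cases h : Sum.inl c ∈ A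
      · simp only [h, ↓reduceDIte]; rfl
      · simp only [h, ↓reduceDIte]; rfl
    · rfl

/-- Tensor-split of a context with a hole. -/
noncomputable def splitTensorPlugIso (A : Set (C.plug R (single a₀)).V)
    (hxA : Sum.inr () ∈ A)
    (hcross : ∀ u ∈ A, ∀ v ∉ A, (C.plug R (single a₀)).adj u v) (Y : LGraph) :
    Iso (C.plug R Y)
      (((C.induce {c | Sum.inl c ∈ A}).plug
          {d : (C.induce {c | Sum.inl c ∈ A}).V | d.1 ∈ R} Y).tensor
        (C.induce {c | Sum.inl c ∉ A})) where
  toEquiv := by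
    classical
    exact
      { toFun := fun z => Sum.elim
          (fun c => if h : Sum.inl c ∈ A then Sum.inl (Sum.inl ⟨c, h⟩) else Sum.inr ⟨c, h⟩)
          (fun y => Sum.inl (Sum.inr y)) z
        invFun := fun z => Sum.elim
          (Sum.elim (fun d => Sum.inl d.1) (fun y => Sum.inr y)) (fun d => Sum.inl d.1) z
        left_inv := by
          rintro (c | y)
          · by_cases h : Sum.inl c ∈ A
            · simp only [Sum.elim, h, ↓reduceDIte]; rfl
            · simp only [Sum.elim, h, ↓reduceDIte]
              rfl
          · rfl
        right_inv := by
          rintro ((⟨c, hc⟩ | y) | ⟨c, hc⟩)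
          · have hc' : Sum.inl c ∈ A := hc
            simp only [Sum.elim, hc', ↓reduceDIte]; rfl
          · rfl
          · have hc' : Sum.inl c ∉ A := hc
            simp only [Sum.elim, hc', ↓reduceDIte]; rfl }
  adj_iff := by
    rintro (c | y) (c' | y')
    · simp only [Equiv.coe_fn_mk, Sum.elim]
      by_cases h : Sum.inl c ∈ A <;> by_cases h' : Sum.inl c' ∈ A
      · simp only [h, h', ↓reduceDIte]; exact Iff.rfl
      · simp only [h, h', ↓reduceDIte]
        exact iff_of_true (hcross _ h _ h') trivial
      · simp only [h, h', ↓reduceDIte]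
        exact iff_of_true (C.symm (hcross _ h' _ h)) trivial
      · simp only [h, h', ↓reduceDIte]; exact Iff.rfl
    · simp only [Equiv.coe_fn_mk, Sum.elim]
      by_cases h : Sum.inl c ∈ A
      · simp only [h, ↓reduceDIte]; exact Iff.rfl
      · simp only [h, ↓reduceDIte]
        exact iff_of_true (hcross _ hxA _ h) trivial
    · simp only [Equiv.coe_fn_mk, Sum.elim]
      by_cases h : Sum.inl c' ∈ A
      · simp only [h, ↓reduceDIte]; exact Iff.rfl
      · simp only [h, ↓reduceDIte]
        exact iff_of_true (hcross _ hxA _ h) trivial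
    · exact Iff.rfl
  label_eq := by
    rintro (c | y)
    · simp only [Equiv.coe_fn_mk, Sum.elim]
      by_cases h : Sum.inl c ∈ A
      · simp only [h, ↓reduceDIte]; rfl
      · simp only [h, ↓reduceDIte]; rfl
    · rfl

open Classical in
/-- The component family for the Gallai decomposition of a context with a hole. -/
noncomputable def KY (Y : LGraph) : (quot (C.plug R (single a₀))).V → LGraph := fun A =>
  (C.induce {c | Sum.inl c ∈ A.1}).plug
    {d : (C.induce {c | Sum.inl c ∈ A.1}).V | d.1 ∈ R}
    (if Sum.inr () ∈ A.1 then Y else LGraph.empty)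

/-- Transport of the Gallai decomposition of `C[x]_R` to an arbitrary filling. -/
noncomputable def isoPlugQuot (hns : NoSplit (C.plug R (single a₀)))
    (h2 : 2 ≤ Fintype.card (C.plug R (single a₀)).V) (Y : LGraph) :
    Iso (C.plug R Y) ((quot (C.plug R (single a₀))).comp (KY C R a₀ Y)) := by
  classical
  set Mj := classOf h2 (Sum.inr ()) with hMj
  have hxMj : Sum.inr () ∈ Mj.1 := mem_classOf h2 _
  have hYV : Y.V = (if Sum.inr () ∈ Mj.1 then Y else LGraph.empty).V :=
    (congrArg LGraph.V (if_pos hxMj)).symm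
  have key0 : ∀ (cc : C.V) (B : (quot (C.plug R (single a₀))).V) (hB : Sum.inl cc ∈ B.1),
      (⟨classOf h2 (Sum.inl cc), Sum.inl ⟨cc, mem_classOf h2 (Sum.inl cc)⟩⟩ :
        ((quot (C.plug R (single a₀))).comp (KY C R a₀ Y)).V) = ⟨B, Sum.inl ⟨cc, hB⟩⟩ := by
    intro cc B hB
    have h := classOf_eq hns h2 hB
    subst h
    rfl
  refine
    { toEquiv :=
        { toFun := fun z => Sum.elim
            (fun c => ⟨classOf h2 (Sum.inl c), Sum.inl ⟨c, mem_classOf h2 (Sum.inl c)⟩⟩)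
            (fun y => ⟨Mj, Sum.inr (cast hYV y)⟩) z
          invFun := fun z => Sum.elim
            (fun d => Sum.inl d.1)
            (fun w' => if h : Sum.inr () ∈ z.1.1
              then Sum.inr (cast (congrArg LGraph.V (if_pos h)) w')
              else (cast (congrArg LGraph.V (if_neg h)) w' : Empty).elim) z.2
          left_inv := ?_
          right_inv := ?_ }
      adj_iff := ?_
      label_eq := ?_ }
  · rintro (c | y)
    · rfl
    · simp only [Sum.elim]
      simp only [hxMj, ↓reduceDIte]
      exact congrArg Sum.inr (eq_of_heq ((cast_heq _ _).trans (cast_heq _ _)))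
  · rintro ⟨A, d | w'⟩
    · simp only [Sum.elim]
      exact key0 d.1 A d.2
    · simp only [Sum.elim]
      by_cases h : Sum.inr () ∈ A.1
      · revert w'
        have hA : Mj = A := classOf_eq hns h2 h
        subst hA
        intro w'
        simp only [h, ↓reduceDIte]
        exact congrArg (fun t => (⟨Mj, Sum.inr t⟩ :
          ((quot (C.plug R (single a₀))).comp (KY C R a₀ Y)).V))
          (eq_of_heq ((cast_heq _ _).trans (cast_heq _ _)))
      · exact (cast (congrArg LGraph.V (if_neg h)) w' : Empty).elim
  · rintro (c | y) (c' | y')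
    · simp only [Equiv.coe_fn_mk, Sum.elim]
      by_cases hcl : classOf h2 (Sum.inl c) = classOf h2 (Sum.inl c')
      · have hm : Sum.inl c' ∈ (classOf h2 (Sum.inl c)).1 := by
          rw [hcl]; exact mem_classOf h2 _
        erw [key0 c' (classOf h2 (Sum.inl c)) hm, comp_adj_same]
        exact Iff.rfl
      · erw [comp_adj_ne _ _ hcl]
        exact (quot_adj_iff hns hcl (mem_classOf h2 _) (mem_classOf h2 _)).symm
    · simp only [Equiv.coe_fn_mk, Sum.elim]
      by_cases hcl : classOf h2 (Sum.inl c) = Mj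
      · have hm : Sum.inl c ∈ Mj.1 := by rw [← hcl]; exact mem_classOf h2 _
        erw [key0 c Mj hm, comp_adj_same]
        exact Iff.rfl
      · erw [comp_adj_ne _ _ hcl]
        exact (quot_adj_iff hns hcl (mem_classOf h2 _) hxMj).symm
    · simp only [Equiv.coe_fn_mk, Sum.elim]
      by_cases hcl : Mj = classOf h2 (Sum.inl c')
      · have hm : Sum.inl c' ∈ Mj.1 := by rw [hcl]; exact mem_classOf h2 _
        erw [key0 c' Mj hm, comp_adj_same]
        exact Iff.rfl
      · erw [comp_adj_ne _ _ hcl]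
        exact (quot_adj_iff hns hcl hxMj (mem_classOf h2 _)).symm
    · simp only [Equiv.coe_fn_mk, Sum.elim]
      erw [comp_adj_same]
      exact (adj_cast (if_pos hxMj).symm hYV y y').symm
  · rintro (c | y)
    · rfl
    · simp only [Equiv.coe_fn_mk, Sum.elim]
      exact label_cast (if_pos hxMj).symm hYV y

end SplitWithHole

end LGraph
/-! ### Context closure of implication -/

open LGraph

lemma context_closure_aux : ∀ (n : ℕ) (C : LGraph) (R : Set C.V) (G H : LGraph),
    Fintype.card C.V ≤ n → Provable GSRule (G.dual.par H) →
    Provable GSRule ((C.plug R G).dual.par (C.plug R H)) := by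
  intro n
  induction n with
  | zero =>
    intro C R G H hcard h
    have hE : IsEmpty C.V := Fintype.card_eq_zero_iff.mp (Nat.le_zero.mp hcard)
    exact prov_iso h (parIso (dualIso (plugEmptyCIso C G R (h := hE)).symm')
      (plugEmptyCIso C H R (h := hE)).symm')
  | succ n ih =>
    intro C R G H hcard h
    classical
    by_cases h0 : Fintype.card C.V = 0
    · have hE : IsEmpty C.V := Fintype.card_eq_zero_iff.mp h0
      exact prov_iso h (parIso (dualIso (plugEmptyCIso C G R (h := hE)).symm')
        (plugEmptyCIso C H R (h := hE)).symm')
    set a₀ : Atom := (0, true) with ha₀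
    have hcardp : Fintype.card (C.plug R (single a₀)).V = Fintype.card C.V + 1 := by
      have e1 : Fintype.card (C.plug R (single a₀)).V = Fintype.card (C.V ⊕ Unit) :=
        Fintype.card_congr (Equiv.refl _)
      rw [e1, Fintype.card_sum]
      simp
    have h2p : 2 ≤ Fintype.card (C.plug R (single a₀)).V := by omega
    rcases main_cases (C.plug R (single a₀)) with
      ⟨A, hAne, hAu, hcross⟩ | ⟨A, hAne, hAu, hcross⟩ | hns
    · -- par split of the one-vertex extension
      obtain ⟨A, hxA, hAu, hcross⟩ : ∃ A : Set (C.plug R (single a₀)).V,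
          Sum.inr () ∈ A ∧ A ≠ Set.univ ∧
          ∀ u ∈ A, ∀ v ∉ A, ¬(C.plug R (single a₀)).adj u v := by
        by_cases hx : Sum.inr () ∈ A
        · exact ⟨A, hx, hAu, hcross⟩
        · refine ⟨{v | v ∉ A}, hx, ?_, ?_⟩
          · obtain ⟨a, ha⟩ := hAne
            intro hcu
            have : a ∈ {v : (C.plug R (single a₀)).V | v ∉ A} := by
              rw [hcu]; exact Set.mem_univ a
            exact this ha
          · intro u hu v hv
            have hvA : v ∈ A := not_not.mp hv
            exact fun hadj => hcross v hvA u hu ((C.plug R (single a₀)).symm hadj)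
      set D' := C.induce {c | Sum.inl c ∈ A} with hD'
      set R' : Set D'.V := {d | d.1 ∈ R} with hR'
      set B := C.induce {c | Sum.inl c ∉ A} with hB
      obtain ⟨c₀, hc₀⟩ : ∃ c : C.V, Sum.inl c ∉ A := by
        obtain ⟨u, hu⟩ : ∃ u, u ∉ A := by
          by_contra hc
          push_neg at hc
          exact hAu (Set.eq_univ_iff_forall.mpr hc)
        rcases u with c | u
        · exact ⟨c, hu⟩
        · exact absurd hxA hu
      have hBne : Nonempty B.V := ⟨⟨c₀, hc₀⟩⟩
      have hA₀u : ({c : C.V | Sum.inl c ∈ A}) ≠ Set.univ := by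
        intro hcu
        have : c₀ ∈ {c : C.V | Sum.inl c ∈ A} := by rw [hcu]; exact Set.mem_univ c₀
        exact hc₀ this
      have hIH : Provable GSRule ((D'.plug R' G).dual.par (D'.plug R' H)) := by
        refine ih D' R' G H ?_ h
        rw [hD']
        have := card_induce_lt (X := C) hA₀u
        omega
      have isoG := splitParPlugIso C R a₀ A hxA hcross G
      have isoH := splitParPlugIso C R a₀ A hxA hcross H
      by_cases hne1 : Nonempty (D'.plug R' G).dual.V
      · have d1 : Deriv GSRule ((D'.plug R' G).dual.par (D'.plug R' H))
            (((D'.plug R' G).dual.par (D'.plug R' H)).plug (Sum.inl '' Set.univ)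
              (B.dual.par B)) :=
          deriv_insert _ _ (prov_id B)
        have d2 : Deriv GSRule
            (((D'.plug R' G).dual.par (D'.plug R' H)).plug (Sum.inl '' Set.univ)
              (B.dual.par B))
            (((D'.plug R' G).dual.tensor (B.dual.par B)).par (D'.plug R' H)) :=
          deriv_of_iso ((plugParLeftIso _ _ _ _).trans'
            (parIso (plugUnivIso _ _) (Iso.refl' _)))
        obtain ⟨pt⟩ := hne1
        have hS : (Sum.inl '' (Set.univ : Set (D'.plug R' G).dual.V) :
            Set ((D'.plug R' G).dual.tensor B.dual).V) ≠ ∅ :=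
          Set.Nonempty.ne_empty ⟨Sum.inl pt, Set.mem_image_of_mem _ (Set.mem_univ pt)⟩
        have hrule := GSRule.ss B ((D'.plug R' G).dual.tensor B.dual)
          (Sum.inl '' Set.univ) hBne hS
        have d3 : Deriv GSRule
            (((D'.plug R' G).dual.tensor (B.dual.par B)).par (D'.plug R' H))
            ((((D'.plug R' G).dual.tensor B.dual).par B).par (D'.plug R' H)) := by
          refine deriv_rule_ctx (D'.plug R' H) ∅ hrule ?_ ?_
          · exact (parCommIso _ _).trans'
              ((parIso (Iso.refl' _) (plugTensorUnivIso _ _ _).symm').trans'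
                (plugEmptySetIso _ _).symm')
          · exact (parCommIso _ _).trans' (plugEmptySetIso _ _).symm'
        have d4 : Deriv GSRule
            ((((D'.plug R' G).dual.tensor B.dual).par B).par (D'.plug R' H))
            ((C.plug R G).dual.par (C.plug R H)) := by
          apply deriv_of_iso
          refine (parAssocIso _ _ _).trans'
            ((parIso (Iso.refl' _) (parCommIso _ _)).trans' ?_)
          exact parIso ((dualParIso _ _).symm'.trans' (dualIso isoG.symm')) isoH.symm'
        exact hIH.trans' (d1.trans' (d2.trans' (d3.trans' d4)))
      · have hE1 : IsEmpty (D'.plug R' G).dual.V := not_nonempty_iff.mp hne1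
        have hED : IsEmpty D'.V := ⟨fun d => hE1.false (Sum.inl d)⟩
        have hEG : IsEmpty G.V := ⟨fun g => hE1.false (Sum.inr g)⟩
        have hH' : Provable GSRule H := prov_iso h (parEmptyL G.dual H (h := hEG))
        have F : Iso ((C.plug R G).dual.par (C.plug R H)) (B.dual.par (H.par B)) := by
          refine parIso ?_ ?_
          · exact (dualIso isoG).trans' ((dualParIso _ _).trans'
              (tensorEmptyL _ _ (h := hE1)))
          · exact isoH.trans' (parIso (plugEmptyCIso D' H R' (h := hED)) (Iso.refl' _))
        refine prov_iso (prov_par (prov_id B) hH') ?_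
        exact (parAssocIso _ _ _).trans'
          ((parIso (Iso.refl' _) (parCommIso _ _)).trans' F.symm')
    · -- tensor split of the one-vertex extension
      obtain ⟨A, hxA, hAu, hcross⟩ : ∃ A : Set (C.plug R (single a₀)).V,
          Sum.inr () ∈ A ∧ A ≠ Set.univ ∧
          ∀ u ∈ A, ∀ v ∉ A, (C.plug R (single a₀)).adj u v := by
        by_cases hx : Sum.inr () ∈ A
        · exact ⟨A, hx, hAu, hcross⟩
        · refine ⟨{v | v ∉ A}, hx, ?_, ?_⟩
          · obtain ⟨a, ha⟩ := hAne
            intro hcu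
            have : a ∈ {v : (C.plug R (single a₀)).V | v ∉ A} := by
              rw [hcu]; exact Set.mem_univ a
            exact this ha
          · intro u hu v hv
            have hvA : v ∈ A := not_not.mp hv
            exact (C.plug R (single a₀)).symm (hcross v hvA u hu)
      set D' := C.induce {c | Sum.inl c ∈ A} with hD'
      set R' : Set D'.V := {d | d.1 ∈ R} with hR'
      set B := C.induce {c | Sum.inl c ∉ A} with hB
      obtain ⟨c₀, hc₀⟩ : ∃ c : C.V, Sum.inl c ∉ A := by
        obtain ⟨u, hu⟩ : ∃ u, u ∉ A := by
          by_contra hc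
          push_neg at hc
          exact hAu (Set.eq_univ_iff_forall.mpr hc)
        rcases u with c | u
        · exact ⟨c, hu⟩
        · exact absurd hxA hu
      have hBne : Nonempty B.V := ⟨⟨c₀, hc₀⟩⟩
      have hA₀u : ({c : C.V | Sum.inl c ∈ A}) ≠ Set.univ := by
        intro hcu
        have : c₀ ∈ {c : C.V | Sum.inl c ∈ A} := by rw [hcu]; exact Set.mem_univ c₀
        exact hc₀ this
      have hIH : Provable GSRule ((D'.plug R' G).dual.par (D'.plug R' H)) := by
        refine ih D' R' G H ?_ h
        rw [hD']
        have := card_induce_lt (X := C) hA₀u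
        omega
      have isoG := splitTensorPlugIso C R a₀ A hxA hcross G
      have isoH := splitTensorPlugIso C R a₀ A hxA hcross H
      by_cases hne1 : Nonempty (D'.plug R' H).V
      · have d1 : Deriv GSRule ((D'.plug R' G).dual.par (D'.plug R' H))
            (((D'.plug R' G).dual.par (D'.plug R' H)).plug (Sum.inr '' Set.univ)
              (B.par B.dual)) :=
          deriv_insert _ _ (prov_iso (prov_id B) (parCommIso _ _))
        have d2 : Deriv GSRule
            (((D'.plug R' G).dual.par (D'.plug R' H)).plug (Sum.inr '' Set.univ)
              (B.par B.dual))
            ((D'.plug R' G).dual.par ((D'.plug R' H).tensor (B.par B.dual))) :=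
          deriv_of_iso ((plugParRightIso _ _ _ _).trans'
            (parIso (Iso.refl' _) (plugUnivIso _ _)))
        obtain ⟨pt⟩ := hne1
        have hS : (Sum.inl '' (Set.univ : Set (D'.plug R' H).V) :
            Set ((D'.plug R' H).tensor B).V) ≠ ∅ :=
          Set.Nonempty.ne_empty ⟨Sum.inl pt, Set.mem_image_of_mem _ (Set.mem_univ pt)⟩
        have hBdne : Nonempty B.dual.V := hBne
        have hrule := GSRule.ss B.dual ((D'.plug R' H).tensor B)
          (Sum.inl '' Set.univ) hBdne hS
        have d3 : Deriv GSRule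
            ((D'.plug R' G).dual.par ((D'.plug R' H).tensor (B.par B.dual)))
            ((D'.plug R' G).dual.par (((D'.plug R' H).tensor B).par B.dual)) := by
          refine deriv_rule_ctx (D'.plug R' G).dual ∅ hrule ?_ ?_
          · exact (parIso (Iso.refl' _) (plugTensorUnivIso _ _ _).symm').trans'
              (plugEmptySetIso _ _).symm'
          · exact (plugEmptySetIso _ _).symm'
        have d4 : Deriv GSRule
            ((D'.plug R' G).dual.par (((D'.plug R' H).tensor B).par B.dual))
            ((C.plug R G).dual.par (C.plug R H)) := by
          apply deriv_of_iso
          refine (parIso (Iso.refl' _) (parCommIso _ _)).trans'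
            ((parAssocIso _ _ _).symm'.trans' ?_)
          exact parIso ((dualTensorIso _ _).symm'.trans' (dualIso isoG.symm')) isoH.symm'
        exact hIH.trans' (d1.trans' (d2.trans' (d3.trans' d4)))
      · have hE1 : IsEmpty (D'.plug R' H).V := not_nonempty_iff.mp hne1
        have hED : IsEmpty D'.V := ⟨fun d => hE1.false (Sum.inl d)⟩
        have hEH : IsEmpty H.V := ⟨fun g => hE1.false (Sum.inr g)⟩
        have hG' : Provable GSRule G.dual := prov_iso h (parEmptyR G.dual H (h := hEH))
        have F : Iso ((C.plug R G).dual.par (C.plug R H)) ((G.dual.par B.dual).par B) := by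
          refine parIso ?_ ?_
          · exact (dualIso isoG).trans' ((dualTensorIso _ _).trans'
              (parIso (dualIso (plugEmptyCIso D' G R' (h := hED))) (Iso.refl' _)))
          · exact isoH.trans' (tensorEmptyL _ _ (h := hE1))
        refine prov_iso (prov_par hG' (prov_id B)) ?_
        exact (parAssocIso _ _ _).symm'.trans' F.symm'
    · -- the one-vertex extension has no split : Gallai quotient
      have hxMj : Sum.inr () ∈ (classOf h2p (Sum.inr ())).1 := mem_classOf h2p _
      set Mj := classOf h2p (Sum.inr ()) with hMjdef
      set A' := C.induce {c | Sum.inl c ∈ Mj.1} with hA'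
      set R'' : Set A'.V := {d | d.1 ∈ R} with hR''
      have eqKMj : ∀ Y : LGraph, KY C R a₀ Y Mj = A'.plug R'' Y := by
        intro Y
        unfold KY
        rw [if_pos hxMj]
      have hxnA : ∀ B : (quot (C.plug R (single a₀))).V, B ≠ Mj → Sum.inr () ∉ B.1 := by
        intro B hBMj hmem
        exact hBMj (classOf_eq hns h2p hmem).symm
      have eqKA : ∀ (Y : LGraph) (B : (quot (C.plug R (single a₀))).V), B ≠ Mj →
          KY C R a₀ Y B = (C.induce {c | Sum.inl c ∈ B.1}).plug
            {d : (C.induce {c | Sum.inl c ∈ B.1}).V | d.1 ∈ R} LGraph.empty := by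
        intro Y B hB
        unfold KY
        rw [if_neg (hxnA B hB)]
      have hKAne : ∀ (Y : LGraph) (B : (quot (C.plug R (single a₀))).V), B ≠ Mj →
          Nonempty (KY C R a₀ Y B).V := by
        intro Y B hB
        obtain ⟨u, hu⟩ := B.2.2.1
        rcases u with c | u
        · exact ⟨Sum.inl ⟨c, hu⟩⟩
        · exact absurd hu (hxnA B hB)
      have isoG := isoPlugQuot C R a₀ hns h2p G
      have isoH := isoPlugQuot C R a₀ hns h2p H
      have hIH : Provable GSRule ((A'.plug R'' G).dual.par (A'.plug R'' H)) := by
        refine ih A' R'' G H ?_ h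
        have hA'u : ({c : C.V | Sum.inl c ∈ Mj.1}) ≠ Set.univ := by
          obtain ⟨u, hu⟩ : ∃ u, u ∉ Mj.1 := by
            by_contra hc
            push_neg at hc
            exact Mj.2.2.2.1 (Set.eq_univ_iff_forall.mpr hc)
          rcases u with c | u
          · intro hcu
            have : c ∈ {c : C.V | Sum.inl c ∈ Mj.1} := by rw [hcu]; exact Set.mem_univ c
            exact hu this
          · exact absurd hxMj hu
        rw [hA']
        have := card_induce_lt (X := C) hA'u
        omega
      set e := Fintype.equivFin (quot (C.plug R (single a₀))).V with he
      by_cases hKGMj : Nonempty (KY C R a₀ G Mj).V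
      · -- main prime case
        set M : Fin (Fintype.card (quot (C.plug R (single a₀))).V) → LGraph :=
          fun i => (KY C R a₀ G (e.symm i)).dual with hM
        set N : Fin (Fintype.card (quot (C.plug R (single a₀))).V) → LGraph :=
          fun i => KY C R a₀ H (e.symm i) with hN
        have hMne : ∀ i, Nonempty (M i).V := by
          intro i
          by_cases hA : e.symm i = Mj
          · show Nonempty (KY C R a₀ G (e.symm i)).V
            rw [hA]
            exact hKGMj
          · exact hKAne G _ hA
        have hrule := GSRule.p (Fintype.card (quot (C.plug R (single a₀))).V)
          (quot (C.plug R (single a₀))) e M N (quot_prime hns h2p) (quot_card4 hns h2p) hMne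
        have hprem : Provable GSRule
            (bigTensor (Fintype.card (quot (C.plug R (single a₀))).V)
              (fun i => (M i).par (N i))) := by
          apply prov_bigTensor
          intro i
          by_cases hA : e.symm i = Mj
          · have eqG' : KY C R a₀ G (e.symm i) = A'.plug R'' G := by rw [hA]; exact eqKMj G
            have eqH' : KY C R a₀ H (e.symm i) = A'.plug R'' H := by rw [hA]; exact eqKMj H
            exact prov_iso hIH
              (parIso (dualIso (castIso eqG').symm') (castIso eqH').symm')
          · have eqG' := eqKA G _ hA
            have eqH' := eqKA H _ hA
            exact prov_iso (prov_id _)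
              (parIso (dualIso (castIso eqG').symm') (castIso eqH').symm')
        have dstep := deriv_rule hrule (Iso.refl' _) (Iso.refl' _)
        have dfin : Deriv GSRule
            (((quot (C.plug R (single a₀))).dual.comp fun v => M (e v)).par
              ((quot (C.plug R (single a₀))).comp fun v => N (e v)))
            ((C.plug R G).dual.par (C.plug R H)) := by
          apply deriv_of_iso
          have fM : Iso ((quot (C.plug R (single a₀))).dual.comp fun v => M (e v))
              ((quot (C.plug R (single a₀))).dual.comp fun B => (KY C R a₀ G B).dual) :=
            compIso' (fun v => castIso (by
              show (KY C R a₀ G (e.symm (e v))).dual = (KY C R a₀ G v).dual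
              exact congrArg (fun B => (KY C R a₀ G B).dual) (e.symm_apply_apply v)))
          have fN : Iso ((quot (C.plug R (single a₀))).comp fun v => N (e v))
              ((quot (C.plug R (single a₀))).comp (KY C R a₀ H)) :=
            compIso' (fun v => castIso (by
              show KY C R a₀ H (e.symm (e v)) = KY C R a₀ H v
              rw [Equiv.symm_apply_apply]))
          exact (parIso (fM.trans' (dualCompIso _ _).symm') fN).trans'
            (parIso (dualIso isoG.symm') isoH.symm')
        exact hprem.trans' (dstep.trans' dfin)
      · have hKE : IsEmpty (KY C R a₀ G Mj).V := not_nonempty_iff.mp hKGMj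
        have hKE' : IsEmpty (A'.plug R'' G).V :=
          ⟨fun z => hKE.false ((castIso (eqKMj G)).toEquiv.symm z)⟩
        have hEA' : IsEmpty A'.V := ⟨fun a => hKE'.false (Sum.inl a)⟩
        have hEG : IsEmpty G.V := ⟨fun g => hKE'.false (Sum.inr g)⟩
        by_cases hHne : Nonempty H.V
        · -- dual prime trick
          have hq' := dual_prime (quot_prime hns h2p)
          have h4' : 4 ≤ Fintype.card (quot (C.plug R (single a₀))).dual.V := by
            have e1 : Fintype.card (quot (C.plug R (single a₀))).dual.V =
                Fintype.card (quot (C.plug R (single a₀))).V :=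
              Fintype.card_congr (Equiv.refl _)
            rw [e1]
            exact quot_card4 hns h2p
          set M' : Fin (Fintype.card (quot (C.plug R (single a₀))).V) → LGraph :=
            fun i => KY C R a₀ H (e.symm i) with hM'
          set N' : Fin (Fintype.card (quot (C.plug R (single a₀))).V) → LGraph :=
            fun i => (KY C R a₀ G (e.symm i)).dual with hN'
          have hM'ne : ∀ i, Nonempty (M' i).V := by
            intro i
            by_cases hA : e.symm i = Mj
            · show Nonempty (KY C R a₀ H (e.symm i)).V
              rw [hA, eqKMj H]
              obtain ⟨hh⟩ := hHne
              exact ⟨Sum.inr hh⟩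
            · exact hKAne H _ hA
          have hrule := GSRule.p (Fintype.card (quot (C.plug R (single a₀))).V)
            (quot (C.plug R (single a₀))).dual e M' N' hq' (by
              have e1 : Fintype.card (quot (C.plug R (single a₀))).dual.V =
                  Fintype.card (quot (C.plug R (single a₀))).V :=
                Fintype.card_congr (Equiv.refl _)
              omega) hM'ne
          have hprem : Provable GSRule
              (bigTensor (Fintype.card (quot (C.plug R (single a₀))).V)
                (fun i => (M' i).par (N' i))) := by
            apply prov_bigTensor
            intro i
            by_cases hA : e.symm i = Mj
            · have eqH' : KY C R a₀ H (e.symm i) = A'.plug R'' H := by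
                rw [hA]; exact eqKMj H
              have hNE : IsEmpty (KY C R a₀ G (e.symm i)).dual.V := by
                show IsEmpty (KY C R a₀ G (e.symm i)).V
                rw [hA]
                exact hKE
              have hH' : Provable GSRule H := prov_iso h (parEmptyL G.dual H (h := hEG))
              refine prov_iso hH' ?_
              refine (parEmptyR H ((KY C R a₀ G (e.symm i)).dual) (h := hNE)).symm'.trans' ?_
              refine parIso ?_ (Iso.refl' _)
              exact ((castIso eqH').trans' (plugEmptyCIso A' H R'' (h := hEA'))).symm'
            · have eqG' := eqKA G _ hA
              have eqH' := eqKA H _ hA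
              refine prov_iso (prov_iso
                (prov_id ((C.induce {c | Sum.inl c ∈ (e.symm i).1}).plug
                  {d : (C.induce {c | Sum.inl c ∈ (e.symm i).1}).V | d.1 ∈ R} LGraph.empty))
                (parCommIso _ _)) ?_
              exact parIso (castIso eqH').symm' (dualIso (castIso eqG')).symm'
          have dstep := deriv_rule hrule (Iso.refl' _) (Iso.refl' _)
          have dfin : Deriv GSRule
              (((quot (C.plug R (single a₀))).dual.dual.comp fun v => M' (e v)).par
                ((quot (C.plug R (single a₀))).dual.comp fun v => N' (e v)))
              ((C.plug R G).dual.par (C.plug R H)) := by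
            apply deriv_of_iso
            have fM : Iso ((quot (C.plug R (single a₀))).dual.dual.comp fun v => M' (e v))
                ((quot (C.plug R (single a₀))).comp (KY C R a₀ H)) :=
              compIso (dualDualIso _) (fun v => castIso (by
                show KY C R a₀ H (e.symm (e v)) = KY C R a₀ H v
                exact congrArg (KY C R a₀ H) (e.symm_apply_apply v)))
            have fN : Iso ((quot (C.plug R (single a₀))).dual.comp fun v => N' (e v))
                ((quot (C.plug R (single a₀))).dual.comp fun B => (KY C R a₀ G B).dual) :=
              compIso' (fun v => castIso (by
                show (KY C R a₀ G (e.symm (e v))).dual = (KY C R a₀ G v).dual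
                exact congrArg (fun B => (KY C R a₀ G B).dual) (e.symm_apply_apply v)))
            refine (parIso fM (fN.trans' (dualCompIso _ _).symm')).trans' ?_
            refine (parCommIso _ _).trans' ?_
            exact parIso (dualIso isoG.symm') isoH.symm'
          exact hprem.trans' (dstep.trans' dfin)
        · have hEH : IsEmpty H.V := not_nonempty_iff.mp hHne
          exact prov_iso (prov_id C)
            (parIso (dualIso (plugEmptyXIso C G R (h := hEG)).symm')
              (plugEmptyXIso C H R (h := hEH)).symm')

/-- **Context closure of implication.** For all graphs `G` and `H`
and every context `C[·]_R`, if `G ⊸ H` (that is, `Ḡ ⅋ H`) is provable in GS, then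
`C[G]_R ⊸ C[H]_R` is provable in GS. -/
theorem implication_context_closure (G H C : LGraph) (R : Set C.V)
    (h : Provable GSRule (G.dual.par H)) :
    Provable GSRule ((C.plug R G).dual.par (C.plug R H)) :=
  context_closure_aux (Fintype.card C.V) C R G H le_rfl h
end GSP
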